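/- In a vertex-minimal subcubic planar graph G without 5-cycles whose square is not 7-choosable, no 3-cycle shares an edge with a 6-cycle. -/

import Mathlib

open SimpleGraph

/-- The square of a graph: two distinct vertices are adjacent iff their
distance in `G` is at most 2 (i.e. they are adjacent or have a common neighbor). -/
def square {V : Type} (G : SimpleGraph V) : SimpleGraph V where
  Adj u v := u ≠ v ∧ (G.Adj u v ∨ ∃ w, G.Adj u w ∧ G.Adj w v)
  symm := by
    constructor
    rintro u v ⟨h1, h2⟩
    refine ⟨h1.symm, ?_⟩
    rcases h2 with h | ⟨w, hw1, hw2⟩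
    · exact Or.inl h.symm
    · exact Or.inr ⟨w, hw2.symm, hw1.symm⟩
  loopless := ⟨fun v h => h.1 rfl⟩

/-- A graph is `k`-choosable if for every assignment of lists (of colors) of size `k`
to the vertices there is a proper coloring choosing each vertex's color from its list. -/
def Choosable {V : Type} (G : SimpleGraph V) (k : ℕ) : Prop :=
  ∀ L : V → Finset ℕ, (∀ v, (L v).card = k) →
    ∃ c : V → ℕ, (∀ v, c v ∈ L v) ∧ ∀ u v, G.Adj u v → c u ≠ c v

/-- A graph is subcubic if every vertex has degree at most 3. -/
def Subcubic {V : Type} (G : SimpleGraph V) : Prop :=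
  ∀ v : V, (G.neighborSet v).ncard ≤ 3

/-- A graph has no 5-cycles. -/
def NoFiveCycle {V : Type} (G : SimpleGraph V) : Prop :=
  ∀ (v : V) (w : G.Walk v v), w.IsCycle → w.length ≠ 5

/-- `H` is a minor of `G`: there are nonempty, pairwise disjoint, connected branch
sets in `G`, one for each vertex of `H`, with an edge of `G` between the branch sets
of any two adjacent vertices of `H`. -/
def IsMinor {V W : Type} (G : SimpleGraph V) (H : SimpleGraph W) : Prop :=
  ∃ f : W → Set V,
    (∀ w, (f w).Nonempty) ∧
    (∀ w, (G.induce (f w)).Connected) ∧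
    (∀ w₁ w₂, w₁ ≠ w₂ → Disjoint (f w₁) (f w₂)) ∧
    (∀ w₁ w₂, H.Adj w₁ w₂ → ∃ a ∈ f w₁, ∃ b ∈ f w₂, G.Adj a b)

/-- Planarity, via Wagner's characterization: no `K₅` minor and no `K₃,₃` minor. -/
def Planar {V : Type} (G : SimpleGraph V) : Prop :=
  ¬ IsMinor G (completeGraph (Fin 5)) ∧
  ¬ IsMinor G (completeBipartiteGraph (Fin 3) (Fin 3))



namespace Aux

lemma two_le_card {s : Finset ℕ} {a b : ℕ} (ha : a ∈ s) (hb : b ∈ s) (hab : a ≠ b) :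
    2 ≤ s.card := by
  have : ({a, b} : Finset ℕ) ⊆ s := by
    intro x hx; simp at hx; rcases hx with rfl | rfl <;> assumption
  calc 2 = ({a, b} : Finset ℕ).card := by rw [Finset.card_insert_of_notMem (by simp [hab]), Finset.card_singleton]
  _ ≤ s.card := Finset.card_le_card this

lemma three_le_card {s : Finset ℕ} {a b c : ℕ} (ha : a ∈ s) (hb : b ∈ s) (hc : c ∈ s)
    (hab : a ≠ b) (hac : a ≠ c) (hbc : b ≠ c) : 3 ≤ s.card := by
  have : ({a, b, c} : Finset ℕ) ⊆ s := by
    intro x hx; simp at hx; rcases hx with rfl | rfl | rfl <;> assumption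
  calc 3 = ({a, b, c} : Finset ℕ).card := by
        rw [Finset.card_insert_of_notMem (by simp [hab, hac]),
          Finset.card_insert_of_notMem (by simp [hbc]), Finset.card_singleton]
  _ ≤ s.card := Finset.card_le_card this

lemma sdiff1_nonempty {s : Finset ℕ} {a : ℕ} (hs : 2 ≤ s.card) : (s \ {a}).Nonempty := by
  apply Finset.card_pos.mp
  have := Finset.le_card_sdiff ({a} : Finset ℕ) s
  simp at this; omega

lemma sdiff2_nonempty {s : Finset ℕ} {a b : ℕ} (hs : 3 ≤ s.card) : (s \ {a, b}).Nonempty := by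
  apply Finset.card_pos.mp
  have := Finset.le_card_sdiff ({a, b} : Finset ℕ) s
  have h2 : ({a, b} : Finset ℕ).card ≤ 2 := (Finset.card_insert_le _ _).trans (by simp)
  omega

/-- the trio selection lemma -/
lemma trio {A B C : Finset ℕ} (hA : 2 ≤ A.card) (hB : 2 ≤ B.card) (hC : 2 ≤ C.card)
    (h : ¬(A = B ∧ A = C ∧ A.card = 2)) :
    ∃ a ∈ A, ∃ b ∈ B, ∃ c ∈ C, a ≠ b ∧ a ≠ c ∧ b ≠ c := by
  by_cases hBA : B ⊆ A
  · by_cases hCA : C ⊆ A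
    · -- B ⊆ A, C ⊆ A
      rcases Nat.lt_or_ge A.card 3 with hlt | hge
      · have hA2 : A.card = 2 := le_antisymm (by omega) hA
        have hBeq : B = A := Finset.eq_of_subset_of_card_le hBA (by omega)
        have hCeq : C = A := Finset.eq_of_subset_of_card_le hCA (by omega)
        exact absurd ⟨hBeq.symm, hCeq.symm, hA2⟩ h
      · obtain ⟨b, hb⟩ := Finset.card_pos.mp (by omega : 0 < B.card)
        obtain ⟨c, hc⟩ := sdiff1_nonempty (a := b) hC
        obtain ⟨a, ha⟩ := sdiff2_nonempty (a := b) (b := c) hge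
        simp only [Finset.mem_sdiff, Finset.mem_insert, Finset.mem_singleton, not_or] at ha hc
        exact ⟨a, ha.1, b, hb, c, hc.1, fun h => ha.2.1 h, fun h => ha.2.2 h, fun h => hc.2 h.symm⟩
    · obtain ⟨c, hcC, hcA⟩ := Finset.not_subset.mp hCA
      obtain ⟨b, hb⟩ := sdiff1_nonempty (a := c) hB
      obtain ⟨a, ha⟩ := sdiff1_nonempty (a := b) hA
      simp only [Finset.mem_sdiff, Finset.mem_singleton] at ha hb
      exact ⟨a, ha.1, b, hb.1, c, hcC, ha.2, fun h => hcA (h ▸ ha.1), hb.2⟩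
  · obtain ⟨b, hbB, hbA⟩ := Finset.not_subset.mp hBA
    obtain ⟨c, hc⟩ := sdiff1_nonempty (a := b) hC
    obtain ⟨a, ha⟩ := sdiff1_nonempty (a := c) hA
    simp only [Finset.mem_sdiff, Finset.mem_singleton] at ha hc
    exact ⟨a, ha.1, b, hbB, c, hc.1, fun h => hbA (h ▸ ha.1), ha.2, fun h => hc.2 h.symm⟩

end Aux

namespace Aux2
open Aux

lemma mem_sdiff2 {s : Finset ℕ} {a x y : ℕ} (h : a ∈ s) (hx : a ≠ x) (hy : a ≠ y) :
    a ∈ s \ {x, y} := by simp [h, hx, hy]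

lemma mem_sdiff3 {s : Finset ℕ} {a x y z : ℕ} (h : a ∈ s) (hx : a ≠ x) (hy : a ≠ y)
    (hz : a ≠ z) : a ∈ s \ {x, y, z} := by simp [h, hx, hy, hz]

lemma trioA3 {A B C : Finset ℕ} (hA : 3 ≤ A.card) (hB : 2 ≤ B.card) (hC : 2 ≤ C.card) :
    ∃ a ∈ A, ∃ b ∈ B, ∃ c ∈ C, a ≠ b ∧ a ≠ c ∧ b ≠ c :=
  trio (by omega) hB hC (by rintro ⟨-, -, h⟩; omega)

lemma trioB3 {A B C : Finset ℕ} (hA : 2 ≤ A.card) (hB : 3 ≤ B.card) (hC : 2 ≤ C.card) :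
    ∃ a ∈ A, ∃ b ∈ B, ∃ c ∈ C, a ≠ b ∧ a ≠ c ∧ b ≠ c :=
  trio hA (by omega) hC (by rintro ⟨h1, -, h2⟩; rw [h1] at h2; omega)

lemma trioC3 {A B C : Finset ℕ} (hA : 2 ≤ A.card) (hB : 2 ≤ B.card) (hC : 3 ≤ C.card) :
    ∃ a ∈ A, ∃ b ∈ B, ∃ c ∈ C, a ≠ b ∧ a ≠ c ∧ b ≠ c :=
  trio hA hB (by omega) (by rintro ⟨-, h1, h2⟩; rw [h1] at h2; omega)

lemma trioNE {A B C : Finset ℕ} (hA : 2 ≤ A.card) (hB : 2 ≤ B.card) (hC : 2 ≤ C.card)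
    {x : ℕ} (hxB : x ∈ B) (hxA : x ∉ A) :
    ∃ a ∈ A, ∃ b ∈ B, ∃ c ∈ C, a ≠ b ∧ a ≠ c ∧ b ≠ c :=
  trio hA hB hC (by rintro ⟨h1, -, -⟩; rw [h1] at hxA; exact hxA hxB)

lemma trioNEC {A B C : Finset ℕ} (hA : 2 ≤ A.card) (hB : 2 ≤ B.card) (hC : 2 ≤ C.card)
    {x : ℕ} (hxC : x ∈ C) (hxA : x ∉ A) :
    ∃ a ∈ A, ∃ b ∈ B, ∃ c ∈ C, a ≠ b ∧ a ≠ c ∧ b ≠ c :=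
  trio hA hB hC (by rintro ⟨-, h1, -⟩; rw [h1] at hxA; exact hxA hxC)

/-- the goal of the extension lemma: colors for `u v w p1 p2 p3 p4` from the
respective lists, proper for the square-adjacency pattern of the configuration. -/
def EXTGoal (Lu Lv Lw L1 L2 L3 L4 : Finset ℕ) : Prop :=
  ∃ cu cv cw c1 c2 c3 c4 : ℕ,
    cu ∈ Lu ∧ cv ∈ Lv ∧ cw ∈ Lw ∧ c1 ∈ L1 ∧ c2 ∈ L2 ∧ c3 ∈ L3 ∧ c4 ∈ L4 ∧
    cu ≠ cv ∧ cu ≠ cw ∧ cu ≠ c1 ∧ cu ≠ c3 ∧ cu ≠ c4 ∧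
    cv ≠ cw ∧ cv ≠ c1 ∧ cv ≠ c2 ∧ cv ≠ c4 ∧
    cw ≠ c1 ∧ cw ≠ c4 ∧
    c1 ≠ c2 ∧ c1 ≠ c3 ∧ c2 ≠ c3 ∧ c2 ≠ c4 ∧ c3 ≠ c4

lemma assemble {Lu Lv Lw L1 L2 L3 L4 : Finset ℕ} {c1 c2 c3 c4 : ℕ}
    (h1 : c1 ∈ L1) (h2 : c2 ∈ L2) (h3 : c3 ∈ L3) (h4 : c4 ∈ L4)
    (h12 : c1 ≠ c2) (h13 : c1 ≠ c3) (h23 : c2 ≠ c3) (h24 : c2 ≠ c4) (h34 : c3 ≠ c4)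
    (htrio : ∃ a ∈ Lw \ {c1, c4}, ∃ b ∈ Lu \ {c1, c3, c4}, ∃ c ∈ Lv \ {c1, c2, c4},
      a ≠ b ∧ a ≠ c ∧ b ≠ c) :
    EXTGoal Lu Lv Lw L1 L2 L3 L4 := by
  obtain ⟨a, ha, b, hb, c, hc, hab, hac, hbc⟩ := htrio
  simp only [Finset.mem_sdiff, Finset.mem_insert, Finset.mem_singleton, not_or] at ha hb hc
  exact ⟨b, c, a, c1, c2, c3, c4, hb.1, hc.1, ha.1, h1, h2, h3, h4,
    hbc, hab.symm, hb.2.1, hb.2.2.1, hb.2.2.2, hac.symm, hc.2.1, hc.2.2.1, hc.2.2.2,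
    ha.2.1, ha.2.2, h12, h13, h23, h24, h34⟩

end Aux2

namespace Aux2
open Aux

set_option maxHeartbeats 1000000 in
lemma ext_main (Lu Lv Lw L1 L2 L3 L4 : Finset ℕ)
    (hu : 5 ≤ Lu.card) (hv : 5 ≤ Lv.card) (hw : 4 ≤ Lw.card)
    (h1 : 3 ≤ L1.card) (h2 : 2 ≤ L2.card) (h3 : 2 ≤ L3.card) (h4 : 3 ≤ L4.card) :
    EXTGoal Lu Lv Lw L1 L2 L3 L4 := by
  classical
  obtain ⟨c2, hc2L⟩ := Finset.card_pos.mp (by omega : 0 < L2.card)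
  obtain ⟨c3, hc3'⟩ := sdiff1_nonempty (a := c2) h3
  rw [Finset.mem_sdiff, Finset.mem_singleton] at hc3'
  obtain ⟨hc3L, h32⟩ := hc3'
  obtain ⟨c1, hc1'⟩ := sdiff2_nonempty (a := c2) (b := c3) h1
  rw [Finset.mem_sdiff] at hc1'
  obtain ⟨hc1L, hc1n⟩ := hc1'
  simp only [Finset.mem_insert, Finset.mem_singleton, not_or] at hc1n
  obtain ⟨h1c2, h1c3⟩ := hc1n
  obtain ⟨c4, hc4'⟩ := sdiff2_nonempty (a := c2) (b := c3) h4
  rw [Finset.mem_sdiff] at hc4'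
  obtain ⟨hc4L, hc4n⟩ := hc4'
  simp only [Finset.mem_insert, Finset.mem_singleton, not_or] at hc4n
  obtain ⟨h4c2, h4c3⟩ := hc4n
  set A : Finset ℕ := Lw \ {c1, c4} with hAdef
  set B : Finset ℕ := Lu \ {c1, c3, c4} with hBdef
  set C : Finset ℕ := Lv \ {c1, c2, c4} with hCdef
  have cardA : 2 ≤ A.card := by
    have := Finset.le_card_sdiff ({c1, c4} : Finset ℕ) Lw
    have h2' : ({c1, c4} : Finset ℕ).card ≤ 2 := (Finset.card_insert_le _ _).trans (by simp)
    rw [hAdef]; omega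
  have cardB : 2 ≤ B.card := by
    have := Finset.le_card_sdiff ({c1, c3, c4} : Finset ℕ) Lu
    have h3' : ({c1, c3, c4} : Finset ℕ).card ≤ 3 :=
      (Finset.card_insert_le _ _).trans (by
        have := Finset.card_insert_le c3 ({c4} : Finset ℕ); simp at this ⊢; omega)
    rw [hBdef]; omega
  have cardC : 2 ≤ C.card := by
    have := Finset.le_card_sdiff ({c1, c2, c4} : Finset ℕ) Lv
    have h3' : ({c1, c2, c4} : Finset ℕ).card ≤ 3 :=
      (Finset.card_insert_le _ _).trans (by
        have := Finset.card_insert_le c2 ({c4} : Finset ℕ); simp at this ⊢; omega)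
    rw [hCdef]; omega
  by_cases hbad : A = B ∧ A = C ∧ A.card = 2
  case neg =>
    exact assemble hc1L hc2L hc3L hc4L h1c2 h1c3 (Ne.symm h32) (Ne.symm h4c2) (Ne.symm h4c3)
      (trio cardA cardB cardC hbad)
  case pos =>
  obtain ⟨hAB, hAC, hA2⟩ := hbad
  obtain ⟨α, β, hαβ, hAeq⟩ := Finset.card_eq_two.mp hA2
  -- facts about members of A
  have memA : ∀ x, x ∈ A →
      (x ∈ Lw ∧ x ≠ c1 ∧ x ≠ c4) ∧ (x ∈ Lu ∧ x ≠ c3) ∧ (x ∈ Lv ∧ x ≠ c2) := by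
    intro x hx
    have hxB := hAB ▸ hx
    have hxC := hAC ▸ hx
    rw [hAdef] at hx; rw [hBdef] at hxB; rw [hCdef] at hxC
    simp only [Finset.mem_sdiff, Finset.mem_insert, Finset.mem_singleton, not_or] at hx hxB hxC
    exact ⟨⟨hx.1, hx.2.1, hx.2.2⟩, ⟨hxB.1, hxB.2.2.1⟩, ⟨hxC.1, hxC.2.2.1⟩⟩
  have hαA : α ∈ A := by rw [hAeq]; simp
  have hβA : β ∈ A := by rw [hAeq]; simp
  obtain ⟨⟨hαw, hα1, hα4⟩, ⟨hαu, hα3⟩, ⟨hαv, hα2⟩⟩ := memA α hαA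
  obtain ⟨⟨hβw, hβ1, hβ4⟩, ⟨hβu, hβ3⟩, ⟨hβv, hβ2⟩⟩ := memA β hβA
  -- c1 ≠ c4
  have h14 : c1 ≠ c4 := by
    intro h
    have hle := Finset.card_le_card_sdiff_add_card (s := Lw) (t := ({c1, c4} : Finset ℕ))
    rw [← hAdef] at hle
    have : ({c1, c4} : Finset ℕ).card ≤ 1 := by rw [h]; simp
    omega
  -- Lw = {α, β, c1, c4}
  have hLw : Lw = {α, β, c1, c4} := by
    apply Finset.eq_of_subset_of_card_le
    · intro x hx
      by_cases hx1 : x = c1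
      · simp [hx1]
      by_cases hx4 : x = c4
      · simp [hx4]
      have hxA : x ∈ A := by rw [hAdef]; simp [hx, hx1, hx4]
      rw [hAeq] at hxA; simp at hxA
      rcases hxA with h | h <;> simp [h]
    · calc ({α, β, c1, c4} : Finset ℕ).card ≤ 4 := by
            apply (Finset.card_insert_le _ _).trans
            have h1' := Finset.card_insert_le β ({c1, c4} : Finset ℕ)
            have h2' := Finset.card_insert_le c1 ({c4} : Finset ℕ)
            simp at h1' h2' ⊢; omega
      _ ≤ Lw.card := hw
  have hLu : Lu = {α, β, c1, c3, c4} := by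
    apply Finset.eq_of_subset_of_card_le
    · intro x hx
      by_cases hx1 : x = c1
      · simp [hx1]
      by_cases hx3 : x = c3
      · simp [hx3]
      by_cases hx4 : x = c4
      · simp [hx4]
      have hxB : x ∈ B := by rw [hBdef]; simp [hx, hx1, hx3, hx4]
      rw [← hAB, hAeq] at hxB; simp at hxB
      rcases hxB with h | h <;> simp [h]
    · calc ({α, β, c1, c3, c4} : Finset ℕ).card ≤ 5 := by
            apply (Finset.card_insert_le _ _).trans
            have h1' := Finset.card_insert_le β ({c1, c3, c4} : Finset ℕ)
            have h2' := Finset.card_insert_le c1 ({c3, c4} : Finset ℕ)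
            have h3' := Finset.card_insert_le c3 ({c4} : Finset ℕ)
            simp at h1' h2' h3' ⊢; omega
      _ ≤ Lu.card := hu
  have hLv : Lv = {α, β, c1, c2, c4} := by
    apply Finset.eq_of_subset_of_card_le
    · intro x hx
      by_cases hx1 : x = c1
      · simp [hx1]
      by_cases hx2 : x = c2
      · simp [hx2]
      by_cases hx4 : x = c4
      · simp [hx4]
      have hxC : x ∈ C := by rw [hCdef]; simp [hx, hx1, hx2, hx4]
      rw [← hAC, hAeq] at hxC; simp at hxC
      rcases hxC with h | h <;> simp [h]
    · calc ({α, β, c1, c2, c4} : Finset ℕ).card ≤ 5 := by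
            apply (Finset.card_insert_le _ _).trans
            have h1' := Finset.card_insert_le β ({c1, c2, c4} : Finset ℕ)
            have h2' := Finset.card_insert_le c1 ({c2, c4} : Finset ℕ)
            have h3' := Finset.card_insert_le c2 ({c4} : Finset ℕ)
            simp at h1' h2' h3' ⊢; omega
      _ ≤ Lv.card := hv
  -- memberships
  have c1w : c1 ∈ Lw := by rw [hLw]; simp
  have c4w : c4 ∈ Lw := by rw [hLw]; simp
  have c1u : c1 ∈ Lu := by rw [hLu]; simp
  have c3u : c3 ∈ Lu := by rw [hLu]; simp
  have c4u : c4 ∈ Lu := by rw [hLu]; simp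
  have c1v : c1 ∈ Lv := by rw [hLv]; simp
  have c2v : c2 ∈ Lv := by rw [hLv]; simp
  have c4v : c4 ∈ Lv := by rw [hLv]; simp
  -- non-memberships
  have hc3w : c3 ∉ Lw := by
    rw [hLw]; simp only [Finset.mem_insert, Finset.mem_singleton]
    push_neg
    exact ⟨fun h => hα3 h.symm, fun h => hβ3 h.symm, fun h => h1c3 h.symm, fun h => h4c3 h.symm⟩
  have hc2w : c2 ∉ Lw := by
    rw [hLw]; simp only [Finset.mem_insert, Finset.mem_singleton]
    push_neg
    exact ⟨fun h => hα2 h.symm, fun h => hβ2 h.symm, fun h => h1c2 h.symm, fun h => h4c2 h.symm⟩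

  -- variation in p1's color
  by_cases hx1 : ∃ x ∈ L1 \ ({c2, c3} : Finset ℕ), x ∉ insert c1 A
  case pos =>
    obtain ⟨x, hxm, hxn⟩ := hx1
    rw [Finset.mem_sdiff] at hxm
    obtain ⟨hxL, hxn2⟩ := hxm
    simp only [Finset.mem_insert, Finset.mem_singleton, not_or] at hxn2 hxn
    obtain ⟨hx2, hx3⟩ := hxn2
    obtain ⟨hxc1, hxA⟩ := hxn
    have hxα : x ≠ α := fun h => hxA (h ▸ hαA)
    have hxβ : x ≠ β := fun h => hxA (h ▸ hβA)
    apply assemble hxL hc2L hc3L hc4L hx2 hx3 (Ne.symm h32) (Ne.symm h4c2) (Ne.symm h4c3)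
    exact trioA3
      (three_le_card (mem_sdiff2 c1w (Ne.symm hxc1) h14)
        (mem_sdiff2 hαw (Ne.symm hxα) hα4) (mem_sdiff2 hβw (Ne.symm hxβ) hβ4)
        (Ne.symm hα1) (Ne.symm hβ1) hαβ)
      (two_le_card (mem_sdiff3 hαu (Ne.symm hxα) hα3 hα4)
        (mem_sdiff3 hβu (Ne.symm hxβ) hβ3 hβ4) hαβ)
      (two_le_card (mem_sdiff3 hαv (Ne.symm hxα) hα2 hα4)
        (mem_sdiff3 hβv (Ne.symm hxβ) hβ2 hβ4) hαβ)
  case neg =>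
  push_neg at hx1
  -- variation in p4's color
  by_cases hx4 : ∃ x ∈ L4 \ ({c2, c3} : Finset ℕ), x ∉ insert c4 A
  case pos =>
    obtain ⟨x, hxm, hxn⟩ := hx4
    rw [Finset.mem_sdiff] at hxm
    obtain ⟨hxL, hxn2⟩ := hxm
    simp only [Finset.mem_insert, Finset.mem_singleton, not_or] at hxn2 hxn
    obtain ⟨hx2, hx3⟩ := hxn2
    obtain ⟨hxc4, hxA⟩ := hxn
    have hxα : x ≠ α := fun h => hxA (h ▸ hαA)
    have hxβ : x ≠ β := fun h => hxA (h ▸ hβA)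
    apply assemble hc1L hc2L hc3L hxL h1c2 h1c3 (Ne.symm h32) (Ne.symm hx2) (Ne.symm hx3)
    exact trioA3
      (three_le_card (mem_sdiff2 c4w (Ne.symm h14) (Ne.symm hxc4))
        (mem_sdiff2 hαw hα1 (Ne.symm hxα)) (mem_sdiff2 hβw hβ1 (Ne.symm hxβ))
        (Ne.symm hα4) (Ne.symm hβ4) hαβ)
      (two_le_card (mem_sdiff3 hαu hα1 hα3 (Ne.symm hxα))
        (mem_sdiff3 hβu hβ1 hβ3 (Ne.symm hxβ)) hαβ)
      (two_le_card (mem_sdiff3 hαv hα1 hα2 (Ne.symm hxα))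
        (mem_sdiff3 hβv hβ1 hβ2 (Ne.symm hxβ)) hαβ)
  case neg =>
  push_neg at hx4
  -- variation in p3's color
  by_cases hx3 : ∃ x ∈ L3, x ∉ ({c2, c3} : Finset ℕ)
  case pos =>
    obtain ⟨γ, hγL, hγn⟩ := hx3
    simp only [Finset.mem_insert, Finset.mem_singleton, not_or] at hγn
    obtain ⟨hγ2, hγ3⟩ := hγn
    by_cases hγ1 : γ = c1
    case pos =>
      rw [hγ1] at hγL
      -- p3 gets color c1, find new color for p1
      obtain ⟨y, hym⟩ := sdiff2_nonempty (a := c2) (b := c1) h1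
      rw [Finset.mem_sdiff] at hym
      obtain ⟨hyL, hyn⟩ := hym
      simp only [Finset.mem_insert, Finset.mem_singleton, not_or] at hyn
      obtain ⟨hy2, hy1⟩ := hyn
      by_cases hy3 : y = c3
      case pos =>
        rw [hy3] at hyL
        apply assemble hyL hc2L hγL hc4L h32 (Ne.symm h1c3) (Ne.symm h1c2)
          (Ne.symm h4c2) h14
        exact trioA3
          (three_le_card (mem_sdiff2 c1w h1c3 h14)
            (mem_sdiff2 hαw hα3 hα4) (mem_sdiff2 hβw hβ3 hβ4)
            (Ne.symm hα1) (Ne.symm hβ1) hαβ)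
          (two_le_card (mem_sdiff3 hαu hα3 hα1 hα4)
            (mem_sdiff3 hβu hβ3 hβ1 hβ4) hαβ)
          (two_le_card (mem_sdiff3 hαv hα3 hα2 hα4)
            (mem_sdiff3 hβv hβ3 hβ2 hβ4) hαβ)
      case neg =>
        have hyA' := hx1 y (by rw [Finset.mem_sdiff]; exact ⟨hyL, by simp [hy2, hy3]⟩)
        rcases Finset.mem_insert.mp hyA' with h | hyA
        · exact absurd h hy1
        obtain ⟨⟨hyw, hyy1, hyy4⟩, ⟨hyu, hyy3⟩, ⟨hyv, hyy2⟩⟩ := memA y hyA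
        obtain ⟨δ, hδm⟩ := sdiff1_nonempty (a := y) (by omega : 2 ≤ A.card)
        rw [Finset.mem_sdiff, Finset.mem_singleton] at hδm
        obtain ⟨hδA, hδy⟩ := hδm
        obtain ⟨⟨hδw, hδ1, hδ4⟩, ⟨hδu, hδ3⟩, ⟨hδv, hδ2⟩⟩ := memA δ hδA
        apply assemble hyL hc2L hγL hc4L hy2 hy1 (Ne.symm h1c2) (Ne.symm h4c2) h14
        exact trioNE
          (two_le_card (mem_sdiff2 c1w (Ne.symm hy1) h14)
            (mem_sdiff2 hδw hδy hδ4) (Ne.symm hδ1))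
          (two_le_card (mem_sdiff3 c3u (Ne.symm hy3) (Ne.symm h1c3) (Ne.symm h4c3))
            (mem_sdiff3 hδu hδy hδ1 hδ4) (Ne.symm hδ3))
          (two_le_card (mem_sdiff3 c1v (Ne.symm hy1) h1c2 h14)
            (mem_sdiff3 hδv hδy hδ2 hδ4) (Ne.symm hδ1))
          (mem_sdiff3 c3u (Ne.symm hy3) (Ne.symm h1c3) (Ne.symm h4c3))
          (fun h => hc3w (Finset.mem_sdiff.mp h).1)
    case neg =>
    by_cases hγ4 : γ = c4
    case pos =>
      rw [hγ4] at hγL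
      -- p3 gets color c4, find new color for p4
      obtain ⟨z, hzm⟩ := sdiff2_nonempty (a := c2) (b := c4) h4
      rw [Finset.mem_sdiff] at hzm
      obtain ⟨hzL, hzn⟩ := hzm
      simp only [Finset.mem_insert, Finset.mem_singleton, not_or] at hzn
      obtain ⟨hz2, hz4⟩ := hzn
      by_cases hz3 : z = c3
      case pos =>
        rw [hz3] at hzL
        apply assemble hc1L hc2L hγL hzL h1c2 h14 (Ne.symm h4c2) (Ne.symm h32) h4c3
        exact trioA3
          (three_le_card (mem_sdiff2 c4w (Ne.symm h14) h4c3)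
            (mem_sdiff2 hαw hα1 hα3) (mem_sdiff2 hβw hβ1 hβ3)
            (Ne.symm hα4) (Ne.symm hβ4) hαβ)
          (two_le_card (mem_sdiff3 hαu hα1 hα4 hα3)
            (mem_sdiff3 hβu hβ1 hβ4 hβ3) hαβ)
          (two_le_card (mem_sdiff3 hαv hα1 hα2 hα3)
            (mem_sdiff3 hβv hβ1 hβ2 hβ3) hαβ)
      case neg =>
        have hzA' := hx4 z (by rw [Finset.mem_sdiff]; exact ⟨hzL, by simp [hz2, hz3]⟩)
        rcases Finset.mem_insert.mp hzA' with h | hzA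
        · exact absurd h hz4
        obtain ⟨⟨hzw, hzz1, hzz4⟩, ⟨hzu, hzz3⟩, ⟨hzv, hzz2⟩⟩ := memA z hzA
        obtain ⟨δ, hδm⟩ := sdiff1_nonempty (a := z) (by omega : 2 ≤ A.card)
        rw [Finset.mem_sdiff, Finset.mem_singleton] at hδm
        obtain ⟨hδA, hδz⟩ := hδm
        obtain ⟨⟨hδw, hδ1, hδ4⟩, ⟨hδu, hδ3⟩, ⟨hδv, hδ2⟩⟩ := memA δ hδA
        apply assemble hc1L hc2L hγL hzL h1c2 h14 (Ne.symm h4c2) (Ne.symm hz2) (Ne.symm hz4)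
        exact trioNE
          (two_le_card (mem_sdiff2 c4w (Ne.symm h14) (Ne.symm hz4))
            (mem_sdiff2 hδw hδ1 hδz) (Ne.symm hδ4))
          (two_le_card (mem_sdiff3 c3u (Ne.symm h1c3) (Ne.symm h4c3) (Ne.symm hz3))
            (mem_sdiff3 hδu hδ1 hδ4 hδz) (Ne.symm hδ3))
          (two_le_card (mem_sdiff3 c4v (Ne.symm h14) h4c2 (Ne.symm hz4))
            (mem_sdiff3 hδv hδ1 hδ2 hδz) (Ne.symm hδ4))
          (mem_sdiff3 c3u (Ne.symm h1c3) (Ne.symm h4c3) (Ne.symm hz3))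
          (fun h => hc3w (Finset.mem_sdiff.mp h).1)
    case neg =>
    by_cases hγA : γ ∈ A
    case pos =>
      obtain ⟨⟨hγw, hγc1, hγc4⟩, ⟨hγu, hγc3⟩, ⟨hγv, hγc2⟩⟩ := memA γ hγA
      obtain ⟨δ, hδm⟩ := sdiff1_nonempty (a := γ) (by omega : 2 ≤ A.card)
      rw [Finset.mem_sdiff, Finset.mem_singleton] at hδm
      obtain ⟨hδA, hδγ⟩ := hδm
      obtain ⟨⟨hδw, hδ1, hδ4⟩, ⟨hδu, hδ3⟩, ⟨hδv, hδ2⟩⟩ := memA δ hδA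
      apply assemble hc1L hc2L hγL hc4L h1c2 (Ne.symm hγc1) (Ne.symm hγc2)
        (Ne.symm h4c2) hγc4
      exact trioNE cardA
        (two_le_card (mem_sdiff3 c3u (Ne.symm h1c3) (Ne.symm hγ3) (Ne.symm h4c3))
          (mem_sdiff3 hδu hδ1 hδγ hδ4) (Ne.symm hδ3))
        cardC
        (mem_sdiff3 c3u (Ne.symm h1c3) (Ne.symm hγ3) (Ne.symm h4c3))
        (fun h => hc3w (Finset.mem_sdiff.mp h).1)
    case neg =>
      have hγα : γ ≠ α := fun h => hγA (h ▸ hαA)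
      have hγβ : γ ≠ β := fun h => hγA (h ▸ hβA)
      apply assemble hc1L hc2L hγL hc4L h1c2 (Ne.symm hγ1) (Ne.symm hγ2)
        (Ne.symm h4c2) hγ4
      exact trioB3 cardA
        (three_le_card (mem_sdiff3 c3u (Ne.symm h1c3) (Ne.symm hγ3) (Ne.symm h4c3))
          (mem_sdiff3 hαu hα1 (Ne.symm hγα) hα4) (mem_sdiff3 hβu hβ1 (Ne.symm hγβ) hβ4)
          (Ne.symm hα3) (Ne.symm hβ3) hαβ)
        cardC
  case neg =>
  push_neg at hx3
  have hL3eq : L3 = {c2, c3} := by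
    apply Finset.eq_of_subset_of_card_le (fun x hx => hx3 x hx)
    calc ({c2, c3} : Finset ℕ).card ≤ 2 := (Finset.card_insert_le _ _).trans (by simp)
    _ ≤ L3.card := h3
  have hc2L3 : c2 ∈ L3 := by rw [hL3eq]; simp
  obtain ⟨e, hem⟩ := sdiff1_nonempty (a := c2) h2
  rw [Finset.mem_sdiff, Finset.mem_singleton] at hem
  obtain ⟨heL, he2⟩ := hem
  by_cases he3 : e = c3
  case pos =>
    rw [he3] at heL
    -- swap colors of p2 and p3
    apply assemble hc1L heL hc2L3 hc4L h1c3 h1c2 h32 (Ne.symm h4c3) (Ne.symm h4c2)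
    exact trioB3 cardA
      (three_le_card (mem_sdiff3 c3u (Ne.symm h1c3) h32 (Ne.symm h4c3))
        (mem_sdiff3 hαu hα1 hα2 hα4) (mem_sdiff3 hβu hβ1 hβ2 hβ4)
        (Ne.symm hα3) (Ne.symm hβ3) hαβ)
      (two_le_card (mem_sdiff3 hαv hα1 hα3 hα4) (mem_sdiff3 hβv hβ1 hβ3 hβ4) hαβ)
  case neg =>
  by_cases he1 : e = c1
  case pos =>
    rw [he1] at heL
    -- p2 gets color c1; find new color for p1
    obtain ⟨y, hym⟩ := sdiff2_nonempty (a := c1) (b := c3) h1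
    rw [Finset.mem_sdiff] at hym
    obtain ⟨hyL, hyn⟩ := hym
    simp only [Finset.mem_insert, Finset.mem_singleton, not_or] at hyn
    obtain ⟨hy1, hy3⟩ := hyn
    by_cases hy2 : y = c2
    case pos =>
      rw [hy2] at hyL
      apply assemble hyL heL hc3L hc4L (Ne.symm h1c2) (Ne.symm h32) h1c3 h14
        (Ne.symm h4c3)
      exact trioA3
        (three_le_card (mem_sdiff2 c1w h1c2 h14)
          (mem_sdiff2 hαw hα2 hα4) (mem_sdiff2 hβw hβ2 hβ4)
          (Ne.symm hα1) (Ne.symm hβ1) hαβ)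
        (two_le_card (mem_sdiff3 hαu hα2 hα3 hα4)
          (mem_sdiff3 hβu hβ2 hβ3 hβ4) hαβ)
        (two_le_card (mem_sdiff3 hαv hα2 hα1 hα4)
          (mem_sdiff3 hβv hβ2 hβ1 hβ4) hαβ)
    case neg =>
      have hyA' := hx1 y (by rw [Finset.mem_sdiff]; exact ⟨hyL, by simp [hy2, hy3]⟩)
      rcases Finset.mem_insert.mp hyA' with h | hyA
      · exact absurd h hy1
      obtain ⟨⟨hyw, hyy1, hyy4⟩, ⟨hyu, hyy3⟩, ⟨hyv, hyy2⟩⟩ := memA y hyA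
      obtain ⟨δ, hδm⟩ := sdiff1_nonempty (a := y) (by omega : 2 ≤ A.card)
      rw [Finset.mem_sdiff, Finset.mem_singleton] at hδm
      obtain ⟨hδA, hδy⟩ := hδm
      obtain ⟨⟨hδw, hδ1, hδ4⟩, ⟨hδu, hδ3⟩, ⟨hδv, hδ2⟩⟩ := memA δ hδA
      apply assemble hyL heL hc3L hc4L hy1 hy3 h1c3 h14 (Ne.symm h4c3)
      exact trioNEC
        (two_le_card (mem_sdiff2 c1w (Ne.symm hy1) h14)
          (mem_sdiff2 hδw hδy hδ4) (Ne.symm hδ1))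
        (two_le_card (mem_sdiff3 c1u (Ne.symm hy1) h1c3 h14)
          (mem_sdiff3 hδu hδy hδ3 hδ4) (Ne.symm hδ1))
        (two_le_card (mem_sdiff3 c2v (Ne.symm hy2) (Ne.symm h1c2) (Ne.symm h4c2))
          (mem_sdiff3 hδv hδy hδ1 hδ4) (Ne.symm hδ2))
        (mem_sdiff3 c2v (Ne.symm hy2) (Ne.symm h1c2) (Ne.symm h4c2))
        (fun h => hc2w (Finset.mem_sdiff.mp h).1)
  case neg =>
  by_cases he4 : e = c4
  case pos =>
    rw [he4] at heL
    -- p2 gets color c4; find new color for p4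
    obtain ⟨z, hzm⟩ := sdiff2_nonempty (a := c4) (b := c3) h4
    rw [Finset.mem_sdiff] at hzm
    obtain ⟨hzL, hzn⟩ := hzm
    simp only [Finset.mem_insert, Finset.mem_singleton, not_or] at hzn
    obtain ⟨hz4, hz3⟩ := hzn
    by_cases hz2 : z = c2
    case pos =>
      rw [hz2] at hzL
      apply assemble hc1L heL hc3L hzL h14 h1c3 h4c3 h4c2 h32
      exact trioA3
        (three_le_card (mem_sdiff2 c4w (Ne.symm h14) h4c2)
          (mem_sdiff2 hαw hα1 hα2) (mem_sdiff2 hβw hβ1 hβ2)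
          (Ne.symm hα4) (Ne.symm hβ4) hαβ)
        (two_le_card (mem_sdiff3 hαu hα1 hα3 hα2)
          (mem_sdiff3 hβu hβ1 hβ3 hβ2) hαβ)
        (two_le_card (mem_sdiff3 hαv hα1 hα4 hα2)
          (mem_sdiff3 hβv hβ1 hβ4 hβ2) hαβ)
    case neg =>
      have hzA' := hx4 z (by rw [Finset.mem_sdiff]; exact ⟨hzL, by simp [hz2, hz3]⟩)
      rcases Finset.mem_insert.mp hzA' with h | hzA
      · exact absurd h hz4
      obtain ⟨⟨hzw, hzz1, hzz4⟩, ⟨hzu, hzz3⟩, ⟨hzv, hzz2⟩⟩ := memA z hzA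
      obtain ⟨δ, hδm⟩ := sdiff1_nonempty (a := z) (by omega : 2 ≤ A.card)
      rw [Finset.mem_sdiff, Finset.mem_singleton] at hδm
      obtain ⟨hδA, hδz⟩ := hδm
      obtain ⟨⟨hδw, hδ1, hδ4⟩, ⟨hδu, hδ3⟩, ⟨hδv, hδ2⟩⟩ := memA δ hδA
      apply assemble hc1L heL hc3L hzL h14 h1c3 h4c3 (Ne.symm hz4) (Ne.symm hz3)
      exact trioNEC
        (two_le_card (mem_sdiff2 c4w (Ne.symm h14) (Ne.symm hz4))
          (mem_sdiff2 hδw hδ1 hδz) (Ne.symm hδ4))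
        (two_le_card (mem_sdiff3 c4u (Ne.symm h14) h4c3 (Ne.symm hz4))
          (mem_sdiff3 hδu hδ1 hδ3 hδz) (Ne.symm hδ4))
        (two_le_card (mem_sdiff3 c2v (Ne.symm h1c2) (Ne.symm h4c2) (Ne.symm hz2))
          (mem_sdiff3 hδv hδ1 hδ4 hδz) (Ne.symm hδ2))
        (mem_sdiff3 c2v (Ne.symm h1c2) (Ne.symm h4c2) (Ne.symm hz2))
        (fun h => hc2w (Finset.mem_sdiff.mp h).1)
  case neg =>
  by_cases heA : e ∈ A
  case pos =>
    obtain ⟨⟨hew, hec1, hec4⟩, ⟨heu, hec3⟩, ⟨hev, hec2⟩⟩ := memA e heA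
    obtain ⟨δ, hδm⟩ := sdiff1_nonempty (a := e) (by omega : 2 ≤ A.card)
    rw [Finset.mem_sdiff, Finset.mem_singleton] at hδm
    obtain ⟨hδA, hδe⟩ := hδm
    obtain ⟨⟨hδw, hδ1, hδ4⟩, ⟨hδu, hδ3⟩, ⟨hδv, hδ2⟩⟩ := memA δ hδA
    apply assemble hc1L heL hc3L hc4L (Ne.symm hec1) h1c3 he3 hec4
      (Ne.symm h4c3)
    exact trioNEC cardA cardB
      (two_le_card (mem_sdiff3 c2v (Ne.symm h1c2) (Ne.symm he2) (Ne.symm h4c2))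
        (mem_sdiff3 hδv hδ1 hδe hδ4) (Ne.symm hδ2))
      (mem_sdiff3 c2v (Ne.symm h1c2) (Ne.symm he2) (Ne.symm h4c2))
      (fun h => hc2w (Finset.mem_sdiff.mp h).1)
  case neg =>
    have heα : e ≠ α := fun h => heA (h ▸ hαA)
    have heβ : e ≠ β := fun h => heA (h ▸ hβA)
    apply assemble hc1L heL hc3L hc4L (Ne.symm he1) h1c3 he3 he4
      (Ne.symm h4c3)
    exact trioC3 cardA cardB
      (three_le_card (mem_sdiff3 c2v (Ne.symm h1c2) (Ne.symm he2) (Ne.symm h4c2))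
        (mem_sdiff3 hαv hα1 (Ne.symm heα) hα4) (mem_sdiff3 hβv hβ1 (Ne.symm heβ) hβ4)
        (Ne.symm hα2) (Ne.symm hβ2) hαβ)

end Aux2



lemma triangle_extract {V : Type} {G : SimpleGraph V} {x : V} (c : G.Walk x x)
    (hc : c.IsCycle) (hl : c.length = 3) {e : Sym2 V} (he : e ∈ c.edges) :
    ∃ u v w : V, G.Adj u v ∧ G.Adj v w ∧ G.Adj w u ∧ u ≠ v ∧ u ≠ w ∧ v ≠ w ∧
      e = s(u, v) := by
  cases c with
  | nil => simp at hl
  | cons h1 p =>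
    cases p with
    | nil => simp at hl
    | cons h2 p =>
      cases p with
      | nil => simp at hl
      | cons h3 p =>
        cases p with
        | cons h4 p => simp [SimpleGraph.Walk.length_cons] at hl
        | nil =>
          rw [SimpleGraph.Walk.isCycle_def] at hc
          obtain ⟨-, -, hnd⟩ := hc
          simp [List.Nodup] at hnd
          obtain ⟨⟨hab, hax⟩, hbx⟩ := hnd
          simp [SimpleGraph.Walk.edges] at he
          rcases he with he | he | he
          · exact ⟨_, _, _, h1, h2, h3, fun h => hax h.symm, fun h => hbx h.symm, hab, he⟩
          · exact ⟨_, _, _, h2, h3, h1, hab, hax, hbx, he⟩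
          · exact ⟨_, _, _, h3, h1, h2, hbx, fun h => hab h.symm, fun h => hax h.symm, he⟩



lemma hexagon_extract {V : Type} {G : SimpleGraph V} {y : V} (c : G.Walk y y)
    (hc : c.IsCycle) (hl : c.length = 6) {e : Sym2 V} (he : e ∈ c.edges) :
    ∃ q0 q1 q2 q3 q4 q5 : V, G.Adj q0 q1 ∧ G.Adj q1 q2 ∧ G.Adj q2 q3 ∧ G.Adj q3 q4 ∧
      G.Adj q4 q5 ∧ G.Adj q5 q0 ∧
      (q0 ≠ q1 ∧ q0 ≠ q2 ∧ q0 ≠ q3 ∧ q0 ≠ q4 ∧ q0 ≠ q5 ∧ q1 ≠ q2 ∧ q1 ≠ q3 ∧ q1 ≠ q4 ∧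
        q1 ≠ q5 ∧ q2 ≠ q3 ∧ q2 ≠ q4 ∧ q2 ≠ q5 ∧ q3 ≠ q4 ∧ q3 ≠ q5 ∧ q4 ≠ q5) ∧
      e = s(q0, q1) := by
  cases c with
  | nil => simp at hl
  | @cons _ a1 _ h1 p =>
  cases p with
  | nil => simp at hl
  | @cons _ a2 _ h2 p =>
  cases p with
  | nil => simp at hl
  | @cons _ a3 _ h3 p =>
  cases p with
  | nil => simp at hl
  | @cons _ a4 _ h4 p =>
  cases p with
  | nil => simp at hl
  | @cons _ a5 _ h5 p =>
  cases p with
  | nil => simp at hl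
  | @cons _ a6 _ h6 p =>
  cases p with
  | cons h7 p => simp [SimpleGraph.Walk.length_cons] at hl
  | nil =>
    rw [SimpleGraph.Walk.isCycle_def] at hc
    obtain ⟨-, -, hnd⟩ := hc
    simp [List.Nodup] at hnd
    obtain ⟨⟨n12, n13, n14, n15, n1y⟩, ⟨n23, n24, n25, n2y⟩, ⟨n34, n35, n3y⟩,
      ⟨n45, n4y⟩, n5y⟩ := hnd
    simp [SimpleGraph.Walk.edges] at he
    rcases he with he | he | he | he | he | he
    · exact ⟨y, a1, a2, a3, a4, a5, h1, h2, h3, h4, h5, h6, ⟨(Ne.symm n1y), (Ne.symm n2y), (Ne.symm n3y), (Ne.symm n4y), (Ne.symm n5y), n12, n13, n14, n15, n23, n24, n25, n34, n35, n45⟩, he⟩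
    · exact ⟨a1, a2, a3, a4, a5, y, h2, h3, h4, h5, h6, h1, ⟨n12, n13, n14, n15, n1y, n23, n24, n25, n2y, n34, n35, n3y, n45, n4y, n5y⟩, he⟩
    · exact ⟨a2, a3, a4, a5, y, a1, h3, h4, h5, h6, h1, h2, ⟨n23, n24, n25, n2y, (Ne.symm n12), n34, n35, n3y, (Ne.symm n13), n45, n4y, (Ne.symm n14), n5y, (Ne.symm n15), (Ne.symm n1y)⟩, he⟩
    · exact ⟨a3, a4, a5, y, a1, a2, h4, h5, h6, h1, h2, h3, ⟨n34, n35, n3y, (Ne.symm n13), (Ne.symm n23), n45, n4y, (Ne.symm n14), (Ne.symm n24), n5y, (Ne.symm n15), (Ne.symm n25), (Ne.symm n1y), (Ne.symm n2y), n12⟩, he⟩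
    · exact ⟨a4, a5, y, a1, a2, a3, h5, h6, h1, h2, h3, h4, ⟨n45, n4y, (Ne.symm n14), (Ne.symm n24), (Ne.symm n34), n5y, (Ne.symm n15), (Ne.symm n25), (Ne.symm n35), (Ne.symm n1y), (Ne.symm n2y), (Ne.symm n3y), n12, n13, n23⟩, he⟩
    · exact ⟨a5, y, a1, a2, a3, a4, h6, h1, h2, h3, h4, h5, ⟨n5y, (Ne.symm n15), (Ne.symm n25), (Ne.symm n35), (Ne.symm n45), (Ne.symm n1y), (Ne.symm n2y), (Ne.symm n3y), (Ne.symm n4y), n12, n13, n14, n23, n24, n34⟩, he⟩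

namespace Aux3

/-- transfer of minors along an injective adjacency-reflecting map -/
lemma minor_transfer {n : ℕ} {V W : Type} (G : SimpleGraph V) (G' : SimpleGraph (Fin n))
    (ι : Fin n → V) (hι : Function.Injective ι)
    (hadj : ∀ i j, G'.Adj i j ↔ G.Adj (ι i) (ι j))
    (H : SimpleGraph W) (h : IsMinor G' H) : IsMinor G H := by
  obtain ⟨f, hne, hconn, hdisj, hedge⟩ := h
  refine ⟨fun w => ι '' f w, fun w => (hne w).image ι, ?_, ?_, ?_⟩
  · intro w
    have iso : G'.induce (f w) ≃g G.induce (ι '' f w) := by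
      refine ⟨Equiv.Set.image ι (f w) hι, ?_⟩
      intro a b
      simp only [Equiv.Set.image_apply, comap_adj, Function.Embedding.coe_subtype]
      exact (hadj a.1 b.1).symm
    exact iso.connected_iff.mp (hconn w)
  · intro w₁ w₂ hw
    exact Set.disjoint_image_of_injective hι (hdisj w₁ w₂ hw)
  · intro w₁ w₂ hw
    obtain ⟨a, ha, b, hb, hab⟩ := hedge w₁ w₂ hw
    exact ⟨ι a, Set.mem_image_of_mem ι ha, ι b, Set.mem_image_of_mem ι hb, (hadj a b).mp hab⟩

/-- The deletion lemma: delete a nonempty set `T` of vertices; by minimality the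
square of the remaining graph is 7-choosable. -/
lemma delete_choosable {V : Type} [Fintype V] (G : SimpleGraph V)
    (hsub : Subcubic G) (hpl : Planar G) (h5 : NoFiveCycle G)
    (hmin : ∀ (n : ℕ), n < Fintype.card V → ∀ G' : SimpleGraph (Fin n),
      Subcubic G' → Planar G' → NoFiveCycle G' → Choosable (square G') 7)
    (T : Set V) (hT : T.Nonempty)
    (L : V → Finset ℕ) (hL : ∀ v, (L v).card = 7) :
    ∃ φ : V → ℕ, (∀ x, x ∉ T → φ x ∈ L x) ∧
      (∀ a b, a ∉ T → b ∉ T → G.Adj a b → φ a ≠ φ b) ∧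
      (∀ a b, a ∉ T → b ∉ T → a ≠ b → (∃ z, z ∉ T ∧ G.Adj a z ∧ G.Adj z b) →
        φ a ≠ φ b) := by
  classical
  obtain ⟨t, ht⟩ := hT
  set n := Fintype.card {x : V // x ∉ T} with hn
  let e : {x : V // x ∉ T} ≃ Fin n := Fintype.equivFin _
  let ι : Fin n → V := fun i => (e.symm i).1
  have hι : Function.Injective ι := fun i j h => by
    have := Subtype.ext h (p := fun x => x ∉ T)
    exact e.symm.injective (Subtype.ext h)
  let G' : SimpleGraph (Fin n) :=
    { Adj := fun i j => G.Adj (ι i) (ι j)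
      symm := ⟨fun i j h => h.symm⟩
      loopless := ⟨fun i h => G.loopless.irrefl _ h⟩ }
  have hadj : ∀ i j, G'.Adj i j ↔ G.Adj (ι i) (ι j) := fun i j => Iff.rfl
  have hsub' : Subcubic G' := by
    intro i
    have himg : ι '' (G'.neighborSet i) ⊆ G.neighborSet (ι i) := by
      rintro x ⟨j, hj, rfl⟩; exact hj
    calc (G'.neighborSet i).ncard = (ι '' G'.neighborSet i).ncard :=
          (Set.ncard_image_of_injective _ hι).symm
    _ ≤ (G.neighborSet (ι i)).ncard := Set.ncard_le_ncard himg (Set.toFinite _)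
    _ ≤ 3 := hsub (ι i)
  have hpl' : Planar G' := by
    constructor
    · exact fun h => hpl.1 (minor_transfer G G' ι hι hadj _ h)
    · exact fun h => hpl.2 (minor_transfer G G' ι hι hadj _ h)
  have h5' : NoFiveCycle G' := by
    intro v w hc hlen
    let hhom : G' →g G := ⟨ι, fun h => h⟩
    have hinj : Function.Injective hhom := hι
    exact h5 _ (w.map hhom) (hc.map hinj)
      (by rw [SimpleGraph.Walk.length_map]; exact hlen)
  have hlt : n < Fintype.card V := by
    rw [hn]
    exact Fintype.card_subtype_lt (x := t) (by simp [ht])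
  obtain ⟨c', hc'mem, hc'prop⟩ := hmin n hlt G' hsub' hpl' h5'
    (fun i => L (ι i)) (fun i => hL (ι i))
  refine ⟨fun x => if hx : x ∉ T then c' (e ⟨x, hx⟩) else 0, ?_, ?_, ?_⟩
  · intro x hx
    simp only [dif_pos hx]
    have := hc'mem (e ⟨x, hx⟩)
    have hval : ι (e ⟨x, hx⟩) = x := by simp [ι]
    rwa [hval] at this
  · intro a b ha hb hab
    simp only [dif_pos ha, dif_pos hb]
    apply hc'prop
    refine ⟨?_, Or.inl ?_⟩
    · intro h
      exact (G.ne_of_adj hab) (by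
        have := congrArg (fun i => ι i) h
        simpa [ι] using this)
    · show G.Adj (ι (e ⟨a, ha⟩)) (ι (e ⟨b, hb⟩))
      simpa [ι] using hab
  · intro a b ha hb hne ⟨z, hz, haz, hzb⟩
    simp only [dif_pos ha, dif_pos hb]
    apply hc'prop
    refine ⟨?_, Or.inr ⟨e ⟨z, hz⟩, ?_, ?_⟩⟩
    · intro h
      exact hne (by
        have := congrArg (fun i => ι i) h
        simpa [ι] using this)
    · show G.Adj (ι (e ⟨a, ha⟩)) (ι (e ⟨z, hz⟩)); simpa [ι] using haz
    · show G.Adj (ι (e ⟨z, hz⟩)) (ι (e ⟨b, hb⟩)); simpa [ι] using hzb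

end Aux3
namespace Aux4

lemma nbr_pin3 {V : Type} [Fintype V] {G : SimpleGraph V} (hsub : Subcubic G) {v a b c : V}
    (hab : a ≠ b) (hac : a ≠ c) (hbc : b ≠ c)
    (ha : G.Adj v a) (hb : G.Adj v b) (hc : G.Adj v c) :
    ∀ x, G.Adj v x → x = a ∨ x = b ∨ x = c := by
  intro x hx
  by_contra hcon
  push_neg at hcon
  obtain ⟨hxa, hxb, hxc⟩ := hcon
  have hsubset : ({x, a, b, c} : Set V) ⊆ G.neighborSet v := by
    intro z hz
    simp only [Set.mem_insert_iff, Set.mem_singleton_iff] at hz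
    rcases hz with rfl | rfl | rfl | rfl <;> assumption
  have hcard : ({x, a, b, c} : Set V).ncard = 4 := by
    rw [Set.ncard_insert_of_notMem (by simp [hxa, hxb, hxc]) (Set.toFinite _),
      Set.ncard_insert_of_notMem (by simp [hab, hac]) (Set.toFinite _),
      Set.ncard_insert_of_notMem (by simp [hbc]) (Set.toFinite _), Set.ncard_singleton]
  have h1 := Set.ncard_le_ncard hsubset (Set.toFinite _)
  have h2 := hsub v
  omega

lemma ncard_third {V : Type} [Fintype V] {G : SimpleGraph V} (hsub : Subcubic G) {v a b : V}
    (hab : a ≠ b) (ha : G.Adj v a) (hb : G.Adj v b) :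
    (G.neighborSet v \ {a, b}).ncard ≤ 1 := by
  have hss : ({a, b} : Set V) ⊆ G.neighborSet v := by
    intro z hz
    simp only [Set.mem_insert_iff, Set.mem_singleton_iff] at hz
    rcases hz with rfl | rfl <;> assumption
  rw [Set.ncard_diff hss (Set.toFinite _)]
  have h1 : ({a, b} : Set V).ncard = 2 := by
    rw [Set.ncard_insert_of_notMem (by simp [hab]) (Set.toFinite _), Set.ncard_singleton]
  have h2 := hsub v
  omega

lemma ncard_del1 {V : Type} [Fintype V] {G : SimpleGraph V} (hsub : Subcubic G) {q w : V}
    (h : G.Adj q w) : (G.neighborSet q \ {w}).ncard ≤ 2 := by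
  have hss : ({w} : Set V) ⊆ G.neighborSet q := by simp [h]
  rw [Set.ncard_diff hss (Set.toFinite _), Set.ncard_singleton]
  have h2 := hsub q
  omega

lemma ncard_bUnion_le {V : Type} [Fintype V] (N : Set V) (hN : N.ncard ≤ 1) (F : V → Set V)
    (hF : ∀ q ∈ N, (F q).ncard ≤ 2) : (⋃ q ∈ N, F q).ncard ≤ 2 := by
  rcases Set.eq_empty_or_nonempty N with h | ⟨q, hq⟩
  · simp [h]
  · have hNq : N = {q} := by
      apply Set.eq_singleton_iff_unique_mem.mpr
      exact ⟨hq, fun x hx => (Set.ncard_le_one (Set.toFinite _)).mp hN x hx q hq⟩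
    rw [hNq]
    simpa using hF q hq

lemma filter_card_ge {V : Type} [Fintype V] {L : Finset ℕ} (hL : L.card = 7) (P : ℕ → Prop)
    [DecidablePred P] (φ : V → ℕ) (S : Set V) {k : ℕ} (hS : S.ncard ≤ k)
    (hcov : ∀ col ∈ L, ¬ P col → ∃ x ∈ S, col = φ x) :
    7 - k ≤ (L.filter P).card := by
  classical
  have himg : L.filter (fun c => ¬ P c) ⊆ (S.toFinite.toFinset).image φ := by
    intro col hcol
    rw [Finset.mem_filter] at hcol
    obtain ⟨x, hx, rfl⟩ := hcov col hcol.1 hcol.2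
    exact Finset.mem_image.mpr ⟨x, (Set.Finite.mem_toFinset _).mpr hx, rfl⟩
  have h1 := Finset.card_le_card himg
  have h2 : ((S.toFinite.toFinset).image φ).card ≤ k := by
    refine le_trans Finset.card_image_le ?_
    rw [← Set.ncard_eq_toFinset_card]
    exact hS
  have h3 := Finset.card_filter_add_card_filter_not (s := L) (p := P)
  omega

end Aux4

namespace Aux5
open Aux Aux2 Aux3 Aux4

lemma five_cycle_false {V : Type} {G : SimpleGraph V} (h5 : NoFiveCycle G) {a b c d e : V}
    (h1 : G.Adj a b) (h2 : G.Adj b c) (h3 : G.Adj c d) (h4 : G.Adj d e) (h0 : G.Adj e a)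
    (nab : a ≠ b) (nac : a ≠ c) (nad : a ≠ d) (nae : a ≠ e)
    (nbc : b ≠ c) (nbd : b ≠ d) (nbe : b ≠ e) (ncd : c ≠ d) (nce : c ≠ e) (nde : d ≠ e) :
    False := by
  apply h5 a (Walk.cons h1 (Walk.cons h2 (Walk.cons h3 (Walk.cons h4 (Walk.cons h0 Walk.nil)))))
  · rw [SimpleGraph.Walk.isCycle_def]
    refine ⟨?_, by simp, ?_⟩
    · rw [SimpleGraph.Walk.isTrail_def]
      simp [List.Nodup, Sym2.eq, Sym2.rel_iff', nab, nac, nad, nae, nbc, nbd, nbe, ncd, nce,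
        nde, nab.symm, nac.symm, nad.symm, nae.symm, nbc.symm, nbd.symm, nbe.symm, ncd.symm,
        nce.symm, nde.symm]
    · simp [List.Nodup, nab, nac, nad, nae, nbc, nbd, nbe, ncd, nce, nde, nab.symm, nac.symm,
        nad.symm, nae.symm, nbc.symm, nbd.symm, nbe.symm, ncd.symm, nce.symm, nde.symm]
  · rfl


lemma chord_case {V : Type} [Fintype V] (G : SimpleGraph V)
    (hsub : Subcubic G) (hpl : Planar G) (h5 : NoFiveCycle G)
    (hmin : ∀ (n : ℕ), n < Fintype.card V → ∀ G' : SimpleGraph (Fin n),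
      Subcubic G' → Planar G' → NoFiveCycle G' → Choosable (square G') 7)
    (u v w p1 p2 p3 p4 : V)
    (huv : G.Adj u v) (hvw : G.Adj v w) (hwu : G.Adj w u)
    (hvp1 : G.Adj v p1) (h12 : G.Adj p1 p2) (h23 : G.Adj p2 p3) (h34 : G.Adj p3 p4)
    (h4u : G.Adj p4 u)
    (nuv : u ≠ v) (nuw : u ≠ w) (nvw : v ≠ w)
    (up1 : u ≠ p1) (up2 : u ≠ p2) (up3 : u ≠ p3) (up4 : u ≠ p4)
    (vp1 : v ≠ p1) (vp2 : v ≠ p2) (vp3 : v ≠ p3) (vp4 : v ≠ p4)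
    (pp12 : p1 ≠ p2) (pp13 : p1 ≠ p3) (pp14 : p1 ≠ p4)
    (pp23 : p2 ≠ p3) (pp24 : p2 ≠ p4) (pp34 : p3 ≠ p4)
    (nwp2 : w ≠ p2) (nwp4 : w ≠ p4)
    (hwp1 : G.Adj w p1) :
    Choosable (square G) 7 := by
  classical
  have nwp1 : w ≠ p1 := hwp1.ne
  have hNu : ∀ x, G.Adj u x → x = v ∨ x = w ∨ x = p4 :=
    nbr_pin3 hsub nvw vp4 nwp4 huv hwu.symm h4u.symm
  have hNv : ∀ x, G.Adj v x → x = u ∨ x = w ∨ x = p1 :=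
    nbr_pin3 hsub nuw up1 nwp1 huv.symm hvw hvp1
  have hNw : ∀ x, G.Adj w x → x = u ∨ x = v ∨ x = p1 :=
    nbr_pin3 hsub nuv up1 vp1 hwu hvw.symm hwp1
  have hN1 : ∀ x, G.Adj p1 x → x = v ∨ x = p2 ∨ x = w :=
    nbr_pin3 hsub vp2 nvw (Ne.symm nwp2) hvp1.symm h12 hwp1.symm
  intro L hL
  obtain ⟨φ, hφmem, hφ1, hφ2⟩ := delete_choosable G hsub hpl h5 hmin {w} ⟨w, rfl⟩ L hL
  -- the forbidden-avoiding list for w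
  set P : ℕ → Prop := fun col => ∀ x, x ∉ ({w} : Set V) → (square G).Adj w x → col ≠ φ x
    with hPdef
  have hcov : ∀ col ∈ L w, ¬ P col → ∃ x ∈ ({u, v, p1, p4, p2} : Set V), col = φ x := by
    intro col _ hcol
    have hcol' : ¬ ∀ x, x ∉ ({w} : Set V) → (square G).Adj w x → col ≠ φ x := hcol
    push_neg at hcol'
    obtain ⟨x, hxT, hxadj, hxcol⟩ := hcol'
    refine ⟨x, ?_, hxcol⟩
    have hxw : x ≠ w := by simpa using hxT
    obtain ⟨-, hadj | ⟨z, hz1, hz2⟩⟩ := hxadj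
    · rcases hNw x hadj with rfl | rfl | rfl <;> simp
    · rcases hNw z hz1 with rfl | rfl | rfl
      · rcases hNu x hz2 with rfl | rfl | rfl
        · simp
        · exact absurd rfl hxw
        · simp
      · rcases hNv x hz2 with rfl | rfl | rfl
        · simp
        · exact absurd rfl hxw
        · simp
      · rcases hN1 x hz2 with rfl | rfl | rfl
        · simp
        · simp
        · exact absurd rfl hxw
  have hScard : ({u, v, p1, p4, p2} : Set V).ncard ≤ 5 := by
    apply le_trans (Set.ncard_insert_le _ _)
    have h1 := Set.ncard_insert_le v ({p1, p4, p2} : Set V)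
    have h2 := Set.ncard_insert_le p1 ({p4, p2} : Set V)
    have h3 := Set.ncard_insert_le p4 ({p2} : Set V)
    have h4 : ({p2} : Set V).ncard = 1 := Set.ncard_singleton _
    omega
  have hfil : 2 ≤ ((L w).filter P).card := by
    have := filter_card_ge (hL w) P φ ({u, v, p1, p4, p2} : Set V) hScard hcov
    omega
  obtain ⟨cw, hcw⟩ := Finset.card_pos.mp (by omega : 0 < ((L w).filter P).card)
  rw [Finset.mem_filter] at hcw
  obtain ⟨hcwL, hcwP⟩ := hcw
  refine ⟨fun x => if x = w then cw else φ x, ?_, ?_⟩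
  · intro x
    by_cases hx : x = w
    · subst hx; simp [hcwL]
    · simp only [if_neg hx]
      exact hφmem x (by simpa using hx)
  · intro a b hab
    by_cases ha : a = w
    · have hbw : b ≠ w := fun h => hab.1 (ha.trans h.symm)
      simp only [if_pos ha, if_neg hbw]
      exact hcwP b (by simpa using hbw) (ha ▸ hab)
    · by_cases hb : b = w
      · simp only [if_pos hb, if_neg ha]
        exact fun h => hcwP a (by simpa using ha) (hb ▸ hab.symm) h.symm
      · simp only [if_neg ha, if_neg hb]
        have ha' : a ∉ ({w} : Set V) := by simpa using ha
        have hb' : b ∉ ({w} : Set V) := by simpa using hb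
        obtain ⟨hne, hadj | ⟨z, hz1, hz2⟩⟩ := hab
        · exact hφ1 a b ha' hb' hadj
        · by_cases hzw : z = w
          · subst hzw
            -- a and b are neighbours of z = w, both ≠ w
            rcases hNw a hz1.symm with rfl | rfl | rfl <;>
              rcases hNw b hz2 with rfl | rfl | rfl
            · exact absurd rfl hne
            · exact hφ1 a b ha' hb' huv
            · exact hφ2 a b ha' hb' hne ⟨v, by simpa using nvw, huv, hvp1⟩
            · exact hφ1 a b ha' hb' huv.symm
            · exact absurd rfl hne
            · exact hφ1 a b ha' hb' hvp1
            · exact hφ2 a b ha' hb' hne ⟨v, by simpa using nvw, hvp1.symm, huv.symm⟩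
            · exact hφ1 a b ha' hb' hvp1.symm
            · exact absurd rfl hne
          · exact hφ2 a b ha' hb' hne ⟨z, by simpa using hzw, hz1, hz2⟩


lemma main_case {V : Type} [Fintype V] (G : SimpleGraph V)
    (hsub : Subcubic G) (hpl : Planar G) (h5 : NoFiveCycle G)
    (hmin : ∀ (n : ℕ), n < Fintype.card V → ∀ G' : SimpleGraph (Fin n),
      Subcubic G' → Planar G' → NoFiveCycle G' → Choosable (square G') 7)
    (u v w p1 p2 p3 p4 : V)
    (huv : G.Adj u v) (hvw : G.Adj v w) (hwu : G.Adj w u)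
    (hvp1 : G.Adj v p1) (h12 : G.Adj p1 p2) (h23 : G.Adj p2 p3) (h34 : G.Adj p3 p4)
    (h4u : G.Adj p4 u)
    (nuv : u ≠ v) (nuw : u ≠ w) (nvw : v ≠ w)
    (up1 : u ≠ p1) (up2 : u ≠ p2) (up3 : u ≠ p3) (up4 : u ≠ p4)
    (vp1 : v ≠ p1) (vp2 : v ≠ p2) (vp3 : v ≠ p3) (vp4 : v ≠ p4)
    (pp12 : p1 ≠ p2) (pp13 : p1 ≠ p3) (pp14 : p1 ≠ p4)
    (pp23 : p2 ≠ p3) (pp24 : p2 ≠ p4) (pp34 : p3 ≠ p4)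
    (nwp1 : w ≠ p1) (nwp2 : w ≠ p2) (nwp3 : w ≠ p3) (nwp4 : w ≠ p4)
    (hnwp1adj : ¬ G.Adj w p1) (hnwp4adj : ¬ G.Adj w p4) :
    Choosable (square G) 7 := by
  classical
  have hNu : ∀ x, G.Adj u x → x = v ∨ x = w ∨ x = p4 :=
    nbr_pin3 hsub nvw vp4 nwp4 huv hwu.symm h4u.symm
  have hNv : ∀ x, G.Adj v x → x = u ∨ x = w ∨ x = p1 :=
    nbr_pin3 hsub nuw up1 nwp1 huv.symm hvw hvp1
  -- excluded adjacencies via 5-cycles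
  have nwp2adj : ¬ G.Adj w p2 := fun h =>
    five_cycle_false h5 h h23 h34 h4u hwu.symm nwp2 nwp3 nwp4 (Ne.symm nuw)
      pp23 pp24 (Ne.symm up2) pp34 (Ne.symm up3) (Ne.symm up4)
  have nwp3adj : ¬ G.Adj w p3 := fun h =>
    five_cycle_false h5 h h23.symm h12.symm hvp1.symm hvw nwp3 nwp2 nwp1 (Ne.symm nvw)
      (Ne.symm pp23) (Ne.symm pp13) (Ne.symm vp3) (Ne.symm pp12) (Ne.symm vp2) (Ne.symm vp1)
  have np1p3 : ¬ G.Adj p1 p3 := fun h =>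
    five_cycle_false h5 hvp1 h h34 h4u huv vp1 vp3 vp4 (Ne.symm nuv)
      pp13 pp14 (Ne.symm up1) pp34 (Ne.symm up3) (Ne.symm up4)
  have np2p4 : ¬ G.Adj p2 p4 := fun h =>
    five_cycle_false h5 h4u.symm h.symm h12.symm hvp1.symm huv.symm up4 up2 up1 nuv
      (Ne.symm pp24) (Ne.symm pp14) (Ne.symm vp4) (Ne.symm pp12) (Ne.symm vp2) (Ne.symm vp1)
  have np1p4 : ¬ G.Adj p1 p4 := fun h =>
    five_cycle_false h5 hwu h4u.symm h.symm hvp1.symm hvw (Ne.symm nuw) nwp4 nwp1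
      (Ne.symm nvw) up4 up1 nuv (Ne.symm pp14) (Ne.symm vp4) (Ne.symm vp1)
  -- no square-adjacency across the five non-edges of the configuration
  have nsq_up2 : ¬ (square G).Adj u p2 := by
    rintro ⟨-, hadj | ⟨z, hz1, hz2⟩⟩
    · rcases hNu p2 hadj with h | h | h
      · exact vp2 h.symm
      · exact nwp2 h.symm
      · exact pp24 h
    · rcases hNu z hz1 with rfl | rfl | rfl
      · rcases hNv p2 hz2 with h | h | h
        · exact up2 h.symm
        · exact nwp2 h.symm
        · exact pp12 h.symm
      · exact nwp2adj hz2
      · exact np2p4 hz2.symm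
  have nsq_vp3 : ¬ (square G).Adj v p3 := by
    rintro ⟨-, hadj | ⟨z, hz1, hz2⟩⟩
    · rcases hNv p3 hadj with h | h | h
      · exact up3 h.symm
      · exact nwp3 h.symm
      · exact pp13 h.symm
    · rcases hNv z hz1 with rfl | rfl | rfl
      · rcases hNu p3 hz2 with h | h | h
        · exact vp3 h.symm
        · exact nwp3 h.symm
        · exact pp34 h
      · exact nwp3adj hz2
      · exact np1p3 hz2
  have nsq_wp2 : ¬ (square G).Adj w p2 := by
    rintro ⟨-, hadj | ⟨z, hz1, hz2⟩⟩
    · exact nwp2adj hadj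
    · by_cases hzu : z = u
      · subst hzu
        rcases hNu p2 hz2 with h | h | h
        · exact vp2 h.symm
        · exact nwp2 h.symm
        · exact pp24 h
      · by_cases hzv : z = v
        · subst hzv
          rcases hNv p2 hz2 with h | h | h
          · exact up2 h.symm
          · exact nwp2 h.symm
          · exact pp12 h.symm
        · exact five_cycle_false h5 hz1 hz2 h12.symm hvp1.symm hvw
            hz1.ne nwp2 nwp1 (Ne.symm nvw) hz2.ne (fun h => hnwp1adj (h ▸ hz1)) hzv
            (Ne.symm pp12) (Ne.symm vp2) (Ne.symm vp1)
  have nsq_wp3 : ¬ (square G).Adj w p3 := by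
    rintro ⟨-, hadj | ⟨z, hz1, hz2⟩⟩
    · exact nwp3adj hadj
    · by_cases hzu : z = u
      · subst hzu
        rcases hNu p3 hz2 with h | h | h
        · exact vp3 h.symm
        · exact nwp3 h.symm
        · exact pp34 h
      · by_cases hzv : z = v
        · subst hzv
          rcases hNv p3 hz2 with h | h | h
          · exact up3 h.symm
          · exact nwp3 h.symm
          · exact pp13 h.symm
        · exact five_cycle_false h5 hz1 hz2 h34 h4u hwu.symm
            hz1.ne nwp3 nwp4 (Ne.symm nuw) hz2.ne (fun h => hnwp4adj (h ▸ hz1)) hzu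
            pp34 (Ne.symm up3) (Ne.symm up4)
  have nsq_p14 : ¬ (square G).Adj p1 p4 := by
    rintro ⟨-, hadj | ⟨z, hz1, hz2⟩⟩
    · exact np1p4 hadj
    · by_cases hzu : z = u
      · subst hzu
        rcases hNu p1 hz1.symm with h | h | h
        · exact vp1 h.symm
        · exact nwp1 h.symm
        · exact pp14 h
      · by_cases hzv : z = v
        · subst hzv
          rcases hNv p4 hz2 with h | h | h
          · exact up4 h.symm
          · exact nwp4 h.symm
          · exact pp14 h.symm
        · by_cases hzw : z = w
          · subst hzw; exact hnwp1adj hz1.symm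
          · by_cases hz2' : z = p2
            · subst hz2'; exact np2p4 hz2
            · by_cases hz3' : z = p3
              · subst hz3'; exact np1p3 hz1
              · exact five_cycle_false h5 hz2 h4u huv hvp1 hz1
                  hz2.ne hzu hzv (Ne.symm hz1.ne) (Ne.symm up4) (Ne.symm vp4)
                  (Ne.symm pp14) nuv up1 vp1
  -- delete the configuration
  intro L hL
  set T : Set V := {u, v, w, p1, p2, p3, p4} with hTdef
  obtain ⟨φ, hφmem, hφ1, hφ2⟩ := delete_choosable G hsub hpl h5 hmin T
    ⟨u, by rw [hTdef]; simp⟩ L hL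
  -- third-neighbour sets
  set Nw3 : Set V := G.neighborSet w \ {u, v} with hNw3def
  set N13 : Set V := G.neighborSet p1 \ {v, p2} with hN13def
  set N23 : Set V := G.neighborSet p2 \ {p1, p3} with hN23def
  set N33 : Set V := G.neighborSet p3 \ {p2, p4} with hN33def
  set N43 : Set V := G.neighborSet p4 \ {p3, u} with hN43def
  have hNw3c : Nw3.ncard ≤ 1 := ncard_third hsub nuv hwu hvw.symm
  have hN13c : N13.ncard ≤ 1 := ncard_third hsub vp2 hvp1.symm h12
  have hN23c : N23.ncard ≤ 1 := ncard_third hsub pp13 h12.symm h23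
  have hN33c : N33.ncard ≤ 1 := ncard_third hsub pp24 h23.symm h34
  have hN43c : N43.ncard ≤ 1 := ncard_third hsub (Ne.symm up3) h34.symm h4u
  have hUw : (⋃ q ∈ Nw3, (G.neighborSet q \ {w})).ncard ≤ 2 :=
    ncard_bUnion_le Nw3 hNw3c _ (fun q hq => ncard_del1 hsub (hq.1 : G.Adj w q).symm)
  have hU1 : (⋃ q ∈ N13, (G.neighborSet q \ {p1})).ncard ≤ 2 :=
    ncard_bUnion_le N13 hN13c _ (fun q hq => ncard_del1 hsub (hq.1 : G.Adj p1 q).symm)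
  have hU2 : (⋃ q ∈ N23, (G.neighborSet q \ {p2})).ncard ≤ 2 :=
    ncard_bUnion_le N23 hN23c _ (fun q hq => ncard_del1 hsub (hq.1 : G.Adj p2 q).symm)
  have hU3 : (⋃ q ∈ N33, (G.neighborSet q \ {p3})).ncard ≤ 2 :=
    ncard_bUnion_le N33 hN33c _ (fun q hq => ncard_del1 hsub (hq.1 : G.Adj p3 q).symm)
  have hU4 : (⋃ q ∈ N43, (G.neighborSet q \ {p4})).ncard ≤ 2 :=
    ncard_bUnion_le N43 hN43c _ (fun q hq => ncard_del1 hsub (hq.1 : G.Adj p4 q).symm)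
  -- coverage of outside square-neighbourhoods
  have covu : ∀ x, x ∉ T → (square G).Adj u x → x ∈ Nw3 ∪ N43 := by
    intro x hxT hxadj
    have h7 : ¬x = u ∧ ¬x = v ∧ ¬x = w ∧ ¬x = p1 ∧ ¬x = p2 ∧ ¬x = p3 ∧ ¬x = p4 := by
      simpa [hTdef] using hxT
    obtain ⟨-, hadj | ⟨z, hz1, hz2⟩⟩ := hxadj
    · rcases hNu x hadj with rfl | rfl | rfl
      · exact absurd (by rw [hTdef]; simp) hxT
      · exact absurd (by rw [hTdef]; simp) hxT
      · exact absurd (by rw [hTdef]; simp) hxT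
    · rcases hNu z hz1 with rfl | rfl | rfl
      · rcases hNv x hz2 with rfl | rfl | rfl
        · exact absurd (by rw [hTdef]; simp) hxT
        · exact absurd (by rw [hTdef]; simp) hxT
        · exact absurd (by rw [hTdef]; simp) hxT
      · exact Set.mem_union_left _ ⟨hz2, by simp [h7.1, h7.2.1]⟩
      · exact Set.mem_union_right _ ⟨hz2, by simp [h7.2.2.2.2.2.1, h7.1]⟩
  have covv : ∀ x, x ∉ T → (square G).Adj v x → x ∈ Nw3 ∪ N13 := by
    intro x hxT hxadj
    have h7 : ¬x = u ∧ ¬x = v ∧ ¬x = w ∧ ¬x = p1 ∧ ¬x = p2 ∧ ¬x = p3 ∧ ¬x = p4 := by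
      simpa [hTdef] using hxT
    obtain ⟨-, hadj | ⟨z, hz1, hz2⟩⟩ := hxadj
    · rcases hNv x hadj with rfl | rfl | rfl
      · exact absurd (by rw [hTdef]; simp) hxT
      · exact absurd (by rw [hTdef]; simp) hxT
      · exact absurd (by rw [hTdef]; simp) hxT
    · rcases hNv z hz1 with rfl | rfl | rfl
      · rcases hNu x hz2 with rfl | rfl | rfl
        · exact absurd (by rw [hTdef]; simp) hxT
        · exact absurd (by rw [hTdef]; simp) hxT
        · exact absurd (by rw [hTdef]; simp) hxT
      · exact Set.mem_union_left _ ⟨hz2, by simp [h7.1, h7.2.1]⟩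
      · exact Set.mem_union_right _ ⟨hz2, by simp [h7.2.1, h7.2.2.2.2.1]⟩
  have covw : ∀ x, x ∉ T → (square G).Adj w x →
      x ∈ Nw3 ∪ ⋃ q ∈ Nw3, (G.neighborSet q \ {w}) := by
    intro x hxT hxadj
    have h7 : ¬x = u ∧ ¬x = v ∧ ¬x = w ∧ ¬x = p1 ∧ ¬x = p2 ∧ ¬x = p3 ∧ ¬x = p4 := by
      simpa [hTdef] using hxT
    obtain ⟨-, hadj | ⟨z, hz1, hz2⟩⟩ := hxadj
    · exact Set.mem_union_left _ ⟨hadj, by simp [h7.1, h7.2.1]⟩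
    · by_cases hzu : z = u
      · subst hzu
        rcases hNu x hz2 with rfl | rfl | rfl
        · exact absurd (by rw [hTdef]; simp) hxT
        · exact absurd (by rw [hTdef]; simp) hxT
        · exact absurd (by rw [hTdef]; simp) hxT
      · by_cases hzv : z = v
        · subst hzv
          rcases hNv x hz2 with rfl | rfl | rfl
          · exact absurd (by rw [hTdef]; simp) hxT
          · exact absurd (by rw [hTdef]; simp) hxT
          · exact absurd (by rw [hTdef]; simp) hxT
        · exact Set.mem_union_right _
            (Set.mem_biUnion (⟨hz1, by simp [hzu, hzv]⟩ : z ∈ Nw3) ⟨hz2, by simp [h7.2.2.1]⟩)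
  have cov1 : ∀ x, x ∉ T → (square G).Adj p1 x →
      x ∈ (N13 ∪ ⋃ q ∈ N13, (G.neighborSet q \ {p1})) ∪ N23 := by
    intro x hxT hxadj
    have h7 : ¬x = u ∧ ¬x = v ∧ ¬x = w ∧ ¬x = p1 ∧ ¬x = p2 ∧ ¬x = p3 ∧ ¬x = p4 := by
      simpa [hTdef] using hxT
    obtain ⟨-, hadj | ⟨z, hz1, hz2⟩⟩ := hxadj
    · exact Set.mem_union_left _ (Set.mem_union_left _ ⟨hadj, by simp [h7.2.1, h7.2.2.2.2.1]⟩)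
    · by_cases hzv : z = v
      · subst hzv
        rcases hNv x hz2 with rfl | rfl | rfl
        · exact absurd (by rw [hTdef]; simp) hxT
        · exact absurd (by rw [hTdef]; simp) hxT
        · exact absurd (by rw [hTdef]; simp) hxT
      · by_cases hz2' : z = p2
        · subst hz2'
          exact Set.mem_union_right _ ⟨hz2, by simp [h7.2.2.2.1, h7.2.2.2.2.2.1]⟩
        · exact Set.mem_union_left _ (Set.mem_union_right _
            (Set.mem_biUnion (⟨hz1, by simp [hzv, hz2']⟩ : z ∈ N13)
              ⟨hz2, by simp [h7.2.2.2.1]⟩))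
  have cov2 : ∀ x, x ∉ T → (square G).Adj p2 x →
      x ∈ ((N23 ∪ ⋃ q ∈ N23, (G.neighborSet q \ {p2})) ∪ N13) ∪ N33 := by
    intro x hxT hxadj
    have h7 : ¬x = u ∧ ¬x = v ∧ ¬x = w ∧ ¬x = p1 ∧ ¬x = p2 ∧ ¬x = p3 ∧ ¬x = p4 := by
      simpa [hTdef] using hxT
    obtain ⟨-, hadj | ⟨z, hz1, hz2⟩⟩ := hxadj
    · exact Set.mem_union_left _ (Set.mem_union_left _ (Set.mem_union_left _
        ⟨hadj, by simp [h7.2.2.2.1, h7.2.2.2.2.2.1]⟩))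
    · by_cases hz1' : z = p1
      · subst hz1'
        exact Set.mem_union_left _ (Set.mem_union_right _
          ⟨hz2, by simp [h7.2.1, h7.2.2.2.2.1]⟩)
      · by_cases hz3' : z = p3
        · subst hz3'
          exact Set.mem_union_right _ ⟨hz2, by simp [h7.2.2.2.2.1, h7.2.2.2.2.2.2]⟩
        · exact Set.mem_union_left _ (Set.mem_union_left _ (Set.mem_union_right _
            (Set.mem_biUnion (⟨hz1, by simp [hz1', hz3']⟩ : z ∈ N23)
              ⟨hz2, by simp [h7.2.2.2.2.1]⟩)))
  have cov3 : ∀ x, x ∉ T → (square G).Adj p3 x →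
      x ∈ ((N33 ∪ ⋃ q ∈ N33, (G.neighborSet q \ {p3})) ∪ N23) ∪ N43 := by
    intro x hxT hxadj
    have h7 : ¬x = u ∧ ¬x = v ∧ ¬x = w ∧ ¬x = p1 ∧ ¬x = p2 ∧ ¬x = p3 ∧ ¬x = p4 := by
      simpa [hTdef] using hxT
    obtain ⟨-, hadj | ⟨z, hz1, hz2⟩⟩ := hxadj
    · exact Set.mem_union_left _ (Set.mem_union_left _ (Set.mem_union_left _
        ⟨hadj, by simp [h7.2.2.2.2.1, h7.2.2.2.2.2.2]⟩))
    · by_cases hz2' : z = p2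
      · subst hz2'
        exact Set.mem_union_left _ (Set.mem_union_right _
          ⟨hz2, by simp [h7.2.2.2.1, h7.2.2.2.2.2.1]⟩)
      · by_cases hz4' : z = p4
        · subst hz4'
          exact Set.mem_union_right _ ⟨hz2, by simp [h7.2.2.2.2.2.1, h7.1]⟩
        · exact Set.mem_union_left _ (Set.mem_union_left _ (Set.mem_union_right _
            (Set.mem_biUnion (⟨hz1, by simp [hz2', hz4']⟩ : z ∈ N33)
              ⟨hz2, by simp [h7.2.2.2.2.2.1]⟩)))
  have cov4 : ∀ x, x ∉ T → (square G).Adj p4 x →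
      x ∈ (N43 ∪ ⋃ q ∈ N43, (G.neighborSet q \ {p4})) ∪ N33 := by
    intro x hxT hxadj
    have h7 : ¬x = u ∧ ¬x = v ∧ ¬x = w ∧ ¬x = p1 ∧ ¬x = p2 ∧ ¬x = p3 ∧ ¬x = p4 := by
      simpa [hTdef] using hxT
    obtain ⟨-, hadj | ⟨z, hz1, hz2⟩⟩ := hxadj
    · exact Set.mem_union_left _ (Set.mem_union_left _ ⟨hadj, by simp [h7.2.2.2.2.2.1, h7.1]⟩)
    · by_cases hzu : z = u
      · subst hzu
        rcases hNu x hz2 with rfl | rfl | rfl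
        · exact absurd (by rw [hTdef]; simp) hxT
        · exact absurd (by rw [hTdef]; simp) hxT
        · exact absurd (by rw [hTdef]; simp) hxT
      · by_cases hz3' : z = p3
        · subst hz3'
          exact Set.mem_union_right _ ⟨hz2, by simp [h7.2.2.2.2.1, h7.2.2.2.2.2.2]⟩
        · exact Set.mem_union_left _ (Set.mem_union_right _
            (Set.mem_biUnion (⟨hz1, by simp [hz3', hzu]⟩ : z ∈ N43)
              ⟨hz2, by simp [h7.2.2.2.2.2.2]⟩))
  -- residual list sizes
  have hcardu : 5 ≤ ((L u).filter fun col => ∀ x, x ∉ T → (square G).Adj u x → col ≠ φ x).card := by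
    have h := filter_card_ge (hL u) (fun col => ∀ x, x ∉ T → (square G).Adj u x → col ≠ φ x)
      φ (Nw3 ∪ N43) (show (Nw3 ∪ N43).ncard ≤ 2 from
        le_trans (Set.ncard_union_le _ _) (by omega)) ?_
    · omega
    · intro col _ hcol
      have hcol' : ¬ ∀ x, x ∉ T → (square G).Adj u x → col ≠ φ x := hcol
      push_neg at hcol'
      obtain ⟨x, hxT, hxadj, hxcol⟩ := hcol'
      exact ⟨x, covu x hxT hxadj, hxcol⟩
  have hcardv : 5 ≤ ((L v).filter fun col => ∀ x, x ∉ T → (square G).Adj v x → col ≠ φ x).card := by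
    have h := filter_card_ge (hL v) (fun col => ∀ x, x ∉ T → (square G).Adj v x → col ≠ φ x)
      φ (Nw3 ∪ N13) (show (Nw3 ∪ N13).ncard ≤ 2 from
        le_trans (Set.ncard_union_le _ _) (by omega)) ?_
    · omega
    · intro col _ hcol
      have hcol' : ¬ ∀ x, x ∉ T → (square G).Adj v x → col ≠ φ x := hcol
      push_neg at hcol'
      obtain ⟨x, hxT, hxadj, hxcol⟩ := hcol'
      exact ⟨x, covv x hxT hxadj, hxcol⟩
  have hcardw : 4 ≤ ((L w).filter fun col => ∀ x, x ∉ T → (square G).Adj w x → col ≠ φ x).card := by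
    have h := filter_card_ge (hL w) (fun col => ∀ x, x ∉ T → (square G).Adj w x → col ≠ φ x)
      φ (Nw3 ∪ ⋃ q ∈ Nw3, (G.neighborSet q \ {w}))
      (show (Nw3 ∪ ⋃ q ∈ Nw3, (G.neighborSet q \ {w})).ncard ≤ 3 from
        le_trans (Set.ncard_union_le _ _) (by omega)) ?_
    · omega
    · intro col _ hcol
      have hcol' : ¬ ∀ x, x ∉ T → (square G).Adj w x → col ≠ φ x := hcol
      push_neg at hcol'
      obtain ⟨x, hxT, hxadj, hxcol⟩ := hcol'
      exact ⟨x, covw x hxT hxadj, hxcol⟩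
  have hcard1 : 3 ≤ ((L p1).filter fun col => ∀ x, x ∉ T → (square G).Adj p1 x → col ≠ φ x).card := by
    have h := filter_card_ge (hL p1) (fun col => ∀ x, x ∉ T → (square G).Adj p1 x → col ≠ φ x)
      φ ((N13 ∪ ⋃ q ∈ N13, (G.neighborSet q \ {p1})) ∪ N23)
      (show ((N13 ∪ ⋃ q ∈ N13, (G.neighborSet q \ {p1})) ∪ N23).ncard ≤ 4 from
        le_trans (Set.ncard_union_le _ _)
        (by have := Set.ncard_union_le N13 (⋃ q ∈ N13, (G.neighborSet q \ {p1})); omega)) ?_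
    · omega
    · intro col _ hcol
      have hcol' : ¬ ∀ x, x ∉ T → (square G).Adj p1 x → col ≠ φ x := hcol
      push_neg at hcol'
      obtain ⟨x, hxT, hxadj, hxcol⟩ := hcol'
      exact ⟨x, cov1 x hxT hxadj, hxcol⟩
  have hcard2 : 2 ≤ ((L p2).filter fun col => ∀ x, x ∉ T → (square G).Adj p2 x → col ≠ φ x).card := by
    have h := filter_card_ge (hL p2) (fun col => ∀ x, x ∉ T → (square G).Adj p2 x → col ≠ φ x)
      φ (((N23 ∪ ⋃ q ∈ N23, (G.neighborSet q \ {p2})) ∪ N13) ∪ N33)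
      (show (((N23 ∪ ⋃ q ∈ N23, (G.neighborSet q \ {p2})) ∪ N13) ∪ N33).ncard ≤ 5 from
        le_trans (Set.ncard_union_le _ _)
        (by
          have h1 := Set.ncard_union_le (N23 ∪ ⋃ q ∈ N23, (G.neighborSet q \ {p2})) N13
          have h2 := Set.ncard_union_le N23 (⋃ q ∈ N23, (G.neighborSet q \ {p2}))
          omega)) ?_
    · omega
    · intro col _ hcol
      have hcol' : ¬ ∀ x, x ∉ T → (square G).Adj p2 x → col ≠ φ x := hcol
      push_neg at hcol'
      obtain ⟨x, hxT, hxadj, hxcol⟩ := hcol'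
      exact ⟨x, cov2 x hxT hxadj, hxcol⟩
  have hcard3 : 2 ≤ ((L p3).filter fun col => ∀ x, x ∉ T → (square G).Adj p3 x → col ≠ φ x).card := by
    have h := filter_card_ge (hL p3) (fun col => ∀ x, x ∉ T → (square G).Adj p3 x → col ≠ φ x)
      φ (((N33 ∪ ⋃ q ∈ N33, (G.neighborSet q \ {p3})) ∪ N23) ∪ N43)
      (show (((N33 ∪ ⋃ q ∈ N33, (G.neighborSet q \ {p3})) ∪ N23) ∪ N43).ncard ≤ 5 from
        le_trans (Set.ncard_union_le _ _)
        (by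
          have h1 := Set.ncard_union_le (N33 ∪ ⋃ q ∈ N33, (G.neighborSet q \ {p3})) N23
          have h2 := Set.ncard_union_le N33 (⋃ q ∈ N33, (G.neighborSet q \ {p3}))
          omega)) ?_
    · omega
    · intro col _ hcol
      have hcol' : ¬ ∀ x, x ∉ T → (square G).Adj p3 x → col ≠ φ x := hcol
      push_neg at hcol'
      obtain ⟨x, hxT, hxadj, hxcol⟩ := hcol'
      exact ⟨x, cov3 x hxT hxadj, hxcol⟩
  have hcard4 : 3 ≤ ((L p4).filter fun col => ∀ x, x ∉ T → (square G).Adj p4 x → col ≠ φ x).card := by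
    have h := filter_card_ge (hL p4) (fun col => ∀ x, x ∉ T → (square G).Adj p4 x → col ≠ φ x)
      φ ((N43 ∪ ⋃ q ∈ N43, (G.neighborSet q \ {p4})) ∪ N33)
      (show ((N43 ∪ ⋃ q ∈ N43, (G.neighborSet q \ {p4})) ∪ N33).ncard ≤ 4 from
        le_trans (Set.ncard_union_le _ _)
        (by have := Set.ncard_union_le N43 (⋃ q ∈ N43, (G.neighborSet q \ {p4})); omega)) ?_
    · omega
    · intro col _ hcol
      have hcol' : ¬ ∀ x, x ∉ T → (square G).Adj p4 x → col ≠ φ x := hcol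
      push_neg at hcol'
      obtain ⟨x, hxT, hxadj, hxcol⟩ := hcol'
      exact ⟨x, cov4 x hxT hxadj, hxcol⟩
  obtain ⟨cu, cv, cw, c1, c2, c3, c4, mu', mv', mw', m1', m2', m3', m4',
      quv, quw, qu1, qu3, qu4, qvw, qv1, qv2, qv4, qw1, qw4, q12, q13, q23, q24, q34⟩ :=
    ext_main _ _ _ _ _ _ _ hcardu hcardv hcardw hcard1 hcard2 hcard3 hcard4
  have muL : cu ∈ L u := (Finset.mem_filter.mp mu').1
  have mvL : cv ∈ L v := (Finset.mem_filter.mp mv').1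
  have mwL : cw ∈ L w := (Finset.mem_filter.mp mw').1
  have m1L : c1 ∈ L p1 := (Finset.mem_filter.mp m1').1
  have m2L : c2 ∈ L p2 := (Finset.mem_filter.mp m2').1
  have m3L : c3 ∈ L p3 := (Finset.mem_filter.mp m3').1
  have m4L : c4 ∈ L p4 := (Finset.mem_filter.mp m4').1
  have Pu : ∀ x, x ∉ T → (square G).Adj u x → cu ≠ φ x := (Finset.mem_filter.mp mu').2
  have Pv : ∀ x, x ∉ T → (square G).Adj v x → cv ≠ φ x := (Finset.mem_filter.mp mv').2
  have Pw : ∀ x, x ∉ T → (square G).Adj w x → cw ≠ φ x := (Finset.mem_filter.mp mw').2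
  have Pp1 : ∀ x, x ∉ T → (square G).Adj p1 x → c1 ≠ φ x := (Finset.mem_filter.mp m1').2
  have Pp2 : ∀ x, x ∉ T → (square G).Adj p2 x → c2 ≠ φ x := (Finset.mem_filter.mp m2').2
  have Pp3 : ∀ x, x ∉ T → (square G).Adj p3 x → c3 ≠ φ x := (Finset.mem_filter.mp m3').2
  have Pp4 : ∀ x, x ∉ T → (square G).Adj p4 x → c4 ≠ φ x := (Finset.mem_filter.mp m4').2
  set C : V → ℕ := fun x => if x = u then cu else if x = v then cv else if x = w then cw
    else if x = p1 then c1 else if x = p2 then c2 else if x = p3 then c3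
    else if x = p4 then c4 else φ x with hCdef
  have ECu : C u = cu := by simp [hCdef]
  have ECv : C v = cv := by simp [hCdef, Ne.symm nuv]
  have ECw : C w = cw := by simp [hCdef, Ne.symm nuw, Ne.symm nvw]
  have EC1 : C p1 = c1 := by simp [hCdef, Ne.symm up1, Ne.symm vp1, Ne.symm nwp1]
  have EC2 : C p2 = c2 := by
    simp [hCdef, Ne.symm up2, Ne.symm vp2, Ne.symm nwp2, Ne.symm pp12]
  have EC3 : C p3 = c3 := by
    simp [hCdef, Ne.symm up3, Ne.symm vp3, Ne.symm nwp3, Ne.symm pp13, Ne.symm pp23]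
  have EC4 : C p4 = c4 := by
    simp [hCdef, Ne.symm up4, Ne.symm vp4, Ne.symm nwp4, Ne.symm pp14, Ne.symm pp24,
      Ne.symm pp34]
  have ECout : ∀ x, x ∉ T → C x = φ x := by
    intro x hxT
    have h7 : ¬x = u ∧ ¬x = v ∧ ¬x = w ∧ ¬x = p1 ∧ ¬x = p2 ∧ ¬x = p3 ∧ ¬x = p4 := by
      simpa [hTdef] using hxT
    simp [hCdef, h7.1, h7.2.1, h7.2.2.1, h7.2.2.2.1, h7.2.2.2.2.1, h7.2.2.2.2.2.1,
      h7.2.2.2.2.2.2]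
  refine ⟨C, ?_, ?_⟩
  · intro x
    by_cases hxu : x = u
    · subst hxu; rw [ECu]; exact muL
    by_cases hxv : x = v
    · subst hxv; rw [ECv]; exact mvL
    by_cases hxw : x = w
    · subst hxw; rw [ECw]; exact mwL
    by_cases hx1 : x = p1
    · subst hx1; rw [EC1]; exact m1L
    by_cases hx2 : x = p2
    · subst hx2; rw [EC2]; exact m2L
    by_cases hx3 : x = p3
    · subst hx3; rw [EC3]; exact m3L
    by_cases hx4 : x = p4
    · subst hx4; rw [EC4]; exact m4L
    have hxT : x ∉ T := by simp [hTdef, hxu, hxv, hxw, hx1, hx2, hx3, hx4]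
    rw [ECout x hxT]; exact hφmem x hxT

  · intro a b hab
    by_cases haT : a ∈ T
    · have haT' := haT
      rw [hTdef] at haT'
      simp only [Set.mem_insert_iff, Set.mem_singleton_iff] at haT'
      by_cases hbT : b ∈ T
      · have hbT' := hbT
        rw [hTdef] at hbT'
        simp only [Set.mem_insert_iff, Set.mem_singleton_iff] at hbT'
        rcases haT' with rfl | rfl | rfl | rfl | rfl | rfl | rfl <;>
          rcases hbT' with rfl | rfl | rfl | rfl | rfl | rfl | rfl
        · exact absurd rfl hab.1
        · rw [ECu, ECv]; exact quv
        · rw [ECu, ECw]; exact quw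
        · rw [ECu, EC1]; exact qu1
        · exact absurd hab nsq_up2
        · rw [ECu, EC3]; exact qu3
        · rw [ECu, EC4]; exact qu4
        · rw [ECv, ECu]; exact (quv).symm
        · exact absurd rfl hab.1
        · rw [ECv, ECw]; exact qvw
        · rw [ECv, EC1]; exact qv1
        · rw [ECv, EC2]; exact qv2
        · exact absurd hab nsq_vp3
        · rw [ECv, EC4]; exact qv4
        · rw [ECw, ECu]; exact (quw).symm
        · rw [ECw, ECv]; exact (qvw).symm
        · exact absurd rfl hab.1
        · rw [ECw, EC1]; exact qw1
        · exact absurd hab nsq_wp2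
        · exact absurd hab nsq_wp3
        · rw [ECw, EC4]; exact qw4
        · rw [EC1, ECu]; exact (qu1).symm
        · rw [EC1, ECv]; exact (qv1).symm
        · rw [EC1, ECw]; exact (qw1).symm
        · exact absurd rfl hab.1
        · rw [EC1, EC2]; exact q12
        · rw [EC1, EC3]; exact q13
        · exact absurd hab nsq_p14
        · exact absurd hab.symm nsq_up2
        · rw [EC2, ECv]; exact (qv2).symm
        · exact absurd hab.symm nsq_wp2
        · rw [EC2, EC1]; exact (q12).symm
        · exact absurd rfl hab.1
        · rw [EC2, EC3]; exact q23
        · rw [EC2, EC4]; exact q24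
        · rw [EC3, ECu]; exact (qu3).symm
        · exact absurd hab.symm nsq_vp3
        · exact absurd hab.symm nsq_wp3
        · rw [EC3, EC1]; exact (q13).symm
        · rw [EC3, EC2]; exact (q23).symm
        · exact absurd rfl hab.1
        · rw [EC3, EC4]; exact q34
        · rw [EC4, ECu]; exact (qu4).symm
        · rw [EC4, ECv]; exact (qv4).symm
        · rw [EC4, ECw]; exact (qw4).symm
        · exact absurd hab.symm nsq_p14
        · rw [EC4, EC2]; exact (q24).symm
        · rw [EC4, EC3]; exact (q34).symm
        · exact absurd rfl hab.1
      · rcases haT' with rfl | rfl | rfl | rfl | rfl | rfl | rfl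
        · rw [ECu, ECout b hbT]; exact Pu b hbT hab
        · rw [ECv, ECout b hbT]; exact Pv b hbT hab
        · rw [ECw, ECout b hbT]; exact Pw b hbT hab
        · rw [EC1, ECout b hbT]; exact Pp1 b hbT hab
        · rw [EC2, ECout b hbT]; exact Pp2 b hbT hab
        · rw [EC3, ECout b hbT]; exact Pp3 b hbT hab
        · rw [EC4, ECout b hbT]; exact Pp4 b hbT hab
    · by_cases hbT : b ∈ T
      · have hbT' := hbT
        rw [hTdef] at hbT'
        simp only [Set.mem_insert_iff, Set.mem_singleton_iff] at hbT'
        rcases hbT' with rfl | rfl | rfl | rfl | rfl | rfl | rfl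
        · rw [ECout a haT, ECu]; exact fun h => Pu a haT hab.symm h.symm
        · rw [ECout a haT, ECv]; exact fun h => Pv a haT hab.symm h.symm
        · rw [ECout a haT, ECw]; exact fun h => Pw a haT hab.symm h.symm
        · rw [ECout a haT, EC1]; exact fun h => Pp1 a haT hab.symm h.symm
        · rw [ECout a haT, EC2]; exact fun h => Pp2 a haT hab.symm h.symm
        · rw [ECout a haT, EC3]; exact fun h => Pp3 a haT hab.symm h.symm
        · rw [ECout a haT, EC4]; exact fun h => Pp4 a haT hab.symm h.symm
      · rw [ECout a haT, ECout b hbT]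
        obtain ⟨hne, hadj | ⟨z, hz1, hz2⟩⟩ := hab
        · exact hφ1 a b haT hbT hadj
        · by_cases hzT : z ∈ T
          · have h7a : ¬a = u ∧ ¬a = v ∧ ¬a = w ∧ ¬a = p1 ∧ ¬a = p2 ∧ ¬a = p3 ∧ ¬a = p4 := by
              simpa [hTdef] using haT
            have h7b : ¬b = u ∧ ¬b = v ∧ ¬b = w ∧ ¬b = p1 ∧ ¬b = p2 ∧ ¬b = p3 ∧ ¬b = p4 := by
              simpa [hTdef] using hbT
            rw [hTdef] at hzT
            simp only [Set.mem_insert_iff, Set.mem_singleton_iff] at hzT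
            rcases hzT with rfl | rfl | rfl | rfl | rfl | rfl | rfl
            · rcases hNu a hz1.symm with rfl | rfl | rfl
              · exact absurd rfl h7a.2.1
              · exact absurd rfl h7a.2.2.1
              · exact absurd rfl h7a.2.2.2.2.2.2
            · rcases hNv a hz1.symm with rfl | rfl | rfl
              · exact absurd rfl h7a.1
              · exact absurd rfl h7a.2.2.1
              · exact absurd rfl h7a.2.2.2.1
            · have haN : a ∈ Nw3 := ⟨hz1.symm, by simp [h7a.1, h7a.2.1]⟩
              have hbN : b ∈ Nw3 := ⟨hz2, by simp [h7b.1, h7b.2.1]⟩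
              exact absurd ((Set.ncard_le_one (Set.toFinite _)).mp hNw3c a haN b hbN) hne
            · have haN : a ∈ N13 := ⟨hz1.symm, by simp [h7a.2.1, h7a.2.2.2.2.1]⟩
              have hbN : b ∈ N13 := ⟨hz2, by simp [h7b.2.1, h7b.2.2.2.2.1]⟩
              exact absurd ((Set.ncard_le_one (Set.toFinite _)).mp hN13c a haN b hbN) hne
            · have haN : a ∈ N23 := ⟨hz1.symm, by simp [h7a.2.2.2.1, h7a.2.2.2.2.2.1]⟩
              have hbN : b ∈ N23 := ⟨hz2, by simp [h7b.2.2.2.1, h7b.2.2.2.2.2.1]⟩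
              exact absurd ((Set.ncard_le_one (Set.toFinite _)).mp hN23c a haN b hbN) hne
            · have haN : a ∈ N33 := ⟨hz1.symm, by simp [h7a.2.2.2.2.1, h7a.2.2.2.2.2.2]⟩
              have hbN : b ∈ N33 := ⟨hz2, by simp [h7b.2.2.2.2.1, h7b.2.2.2.2.2.2]⟩
              exact absurd ((Set.ncard_le_one (Set.toFinite _)).mp hN33c a haN b hbN) hne
            · have haN : a ∈ N43 := ⟨hz1.symm, by simp [h7a.2.2.2.2.2.1, h7a.1]⟩
              have hbN : b ∈ N43 := ⟨hz2, by simp [h7b.2.2.2.2.2.1, h7b.1]⟩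
              exact absurd ((Set.ncard_le_one (Set.toFinite _)).mp hN43c a haN b hbN) hne
          · exact hφ2 a b haT hbT hne ⟨z, hzT, hz1, hz2⟩

end Aux5

namespace Aux6
open Aux Aux2 Aux3 Aux4 Aux5

lemma core {V : Type} [Fintype V] (G : SimpleGraph V)
    (hsub : Subcubic G) (hpl : Planar G) (h5 : NoFiveCycle G)
    (hmin : ∀ (n : ℕ), n < Fintype.card V → ∀ G' : SimpleGraph (Fin n),
      Subcubic G' → Planar G' → NoFiveCycle G' → Choosable (square G') 7)
    (u v w p1 p2 p3 p4 : V)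
    (huv : G.Adj u v) (hvw : G.Adj v w) (hwu : G.Adj w u)
    (hvp1 : G.Adj v p1) (h12 : G.Adj p1 p2) (h23 : G.Adj p2 p3) (h34 : G.Adj p3 p4)
    (h4u : G.Adj p4 u)
    (nuv : u ≠ v) (nuw : u ≠ w) (nvw : v ≠ w)
    (up1 : u ≠ p1) (up2 : u ≠ p2) (up3 : u ≠ p3) (up4 : u ≠ p4)
    (vp1 : v ≠ p1) (vp2 : v ≠ p2) (vp3 : v ≠ p3) (vp4 : v ≠ p4)
    (pp12 : p1 ≠ p2) (pp13 : p1 ≠ p3) (pp14 : p1 ≠ p4)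
    (pp23 : p2 ≠ p3) (pp24 : p2 ≠ p4) (pp34 : p3 ≠ p4) :
    Choosable (square G) 7 := by
  have nwp1 : w ≠ p1 := by
    intro h
    rw [h] at hwu
    exact five_cycle_false h5 hwu.symm h12 h23 h34 h4u up1 up2 up3 up4 pp12 pp13 pp14
      pp23 pp24 pp34
  have nwp2 : w ≠ p2 := by
    intro h
    rw [h] at hvw
    exact five_cycle_false h5 hvw h23 h34 h4u huv vp2 vp3 vp4 (Ne.symm nuv) pp23 pp24
      (Ne.symm up2) pp34 (Ne.symm up3) (Ne.symm up4)
  have nwp3 : w ≠ p3 := by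
    intro h
    rw [h] at hwu
    exact five_cycle_false h5 hwu.symm h23.symm h12.symm hvp1.symm huv.symm up3 up2 up1 nuv
      (Ne.symm pp23) (Ne.symm pp13) (Ne.symm vp3) (Ne.symm pp12) (Ne.symm vp2) (Ne.symm vp1)
  have nwp4 : w ≠ p4 := by
    intro h
    rw [h] at hvw
    exact five_cycle_false h5 hvw h34.symm h23.symm h12.symm hvp1.symm vp4 vp3 vp2 vp1
      (Ne.symm pp34) (Ne.symm pp24) (Ne.symm pp14) (Ne.symm pp23) (Ne.symm pp13)
      (Ne.symm pp12)
  by_cases hwp1 : G.Adj w p1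
  · exact chord_case G hsub hpl h5 hmin u v w p1 p2 p3 p4 huv hvw hwu hvp1 h12 h23 h34 h4u
      nuv nuw nvw up1 up2 up3 up4 vp1 vp2 vp3 vp4 pp12 pp13 pp14 pp23 pp24 pp34
      nwp2 nwp4 hwp1
  by_cases hwp4 : G.Adj w p4
  · exact chord_case G hsub hpl h5 hmin v u w p4 p3 p2 p1 huv.symm hwu.symm hvw.symm
      h4u.symm h34.symm h23.symm h12.symm hvp1.symm
      (Ne.symm nuv) nvw nuw vp4 vp3 vp2 vp1 up4 up3 up2 up1
      (Ne.symm pp34) (Ne.symm pp24) (Ne.symm pp14) (Ne.symm pp23) (Ne.symm pp13)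
      (Ne.symm pp12) nwp3 nwp1 hwp4
  · exact main_case G hsub hpl h5 hmin u v w p1 p2 p3 p4 huv hvw hwu hvp1 h12 h23 h34 h4u
      nuv nuw nvw up1 up2 up3 up4 vp1 vp2 vp3 vp4 pp12 pp13 pp14 pp23 pp24 pp34
      nwp1 nwp2 nwp3 nwp4 hwp1 hwp4

end Aux6

/-- In a vertex-minimal subcubic planar graph without 5-cycles whose square is not
7-choosable, no 3-cycle shares an edge with a 6-cycle. -/
theorem minimal_counterexample_no_triangle_sharing_edge_with_six_cycle
    {V : Type} [Fintype V] (G : SimpleGraph V)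
    (hsub : Subcubic G) (hpl : Planar G) (h5 : NoFiveCycle G)
    (hnot : ¬ Choosable (square G) 7)
    (hmin : ∀ (n : ℕ), n < Fintype.card V → ∀ G' : SimpleGraph (Fin n),
      Subcubic G' → Planar G' → NoFiveCycle G' → Choosable (square G') 7) :
    ¬ ∃ (x y : V) (c₁ : G.Walk x x) (c₂ : G.Walk y y),
      c₁.IsCycle ∧ c₂.IsCycle ∧ c₁.length = 3 ∧ c₂.length = 6 ∧
      ∃ e, e ∈ c₁.edges ∧ e ∈ c₂.edges := by
  classical
  rintro ⟨x, y, c₁, c₂, hc₁, hc₂, hl₁, hl₂, e, he₁, he₂⟩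
  obtain ⟨u, v, w, huv, hvw, hwu, nuv, nuw, nvw, he⟩ := triangle_extract c₁ hc₁ hl₁ he₁
  obtain ⟨q0, q1, q2, q3, q4, q5, a01, a12, a23, a34, a45, a50,
      ⟨d01, d02, d03, d04, d05, d12, d13, d14, d15, d23, d24, d25, d34, d35, d45⟩, he'⟩ :=
    hexagon_extract c₂ hc₂ hl₂ he₂
  rw [he, Sym2.eq_iff] at he'
  rcases he' with ⟨rfl, rfl⟩ | ⟨rfl, rfl⟩
  · exact hnot (Aux6.core G hsub hpl h5 hmin u v w q2 q3 q4 q5 huv hvw hwu a12 a23 a34 a45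
      a50 nuv nuw nvw d02 d03 d04 d05 d12 d13 d14 d15 d23 d24 d25 d34 d35 d45)
  · exact hnot (Aux6.core G hsub hpl h5 hmin u v w q5 q4 q3 q2 huv hvw hwu a50.symm
      a45.symm a34.symm a23.symm a12.symm nuv nuw nvw d15 d14 d13 d12 d05 d04 d03 d02
      (Ne.symm d45) (Ne.symm d35) (Ne.symm d25) (Ne.symm d34) (Ne.symm d24) (Ne.symm d23))
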